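/- arXiv:2604.10779 — 2 statements merged into one kernel-verified Lean document; each statement's English description precedes it below -/
import Mathlib

section
/- Let π ∈ S_n'. For all i ∈ {1,...,n}: col_π(i) = col_{α_π}(T_π(i)); row_π(i) = row_{α_π}(T_π(i)); colpos_π(i) = colpos_{α_π}(T_π(i)); if col_π(i) > 1, then T_π(leftof_π(i)) = leftof_{α_π}(T_π(i)); and if colpos_π(i) > 1, then T_π(upof_π(i)) = upof_{α_π}(T_π(i)). -/
noncomputable section
theorem foldrMaxMem (x : ℕ) (xs : List ℕ) : (x :: xs).foldr max 0 ∈ x :: xs := by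
  induction xs generalizing x with
  | nil => simp
  | cons y ys ih =>
    rcases max_choice x ((y :: ys).foldr max 0) with h | h
    · simp only [List.foldr_cons] at h ⊢
      rw [h]; exact List.mem_cons_self
    · simp only [List.foldr_cons] at h ⊢
      rw [h]; exact List.mem_cons_of_mem _ (ih y)
theorem takeWhileLt (l : List ℕ) (m : ℕ) (hm : m ∈ l) :
    (l.takeWhile (fun y => y ≠ m)).length < l.length := by
  have hd : l.dropWhile (fun y => y ≠ m) ≠ [] := by
    intro h; rw [List.dropWhile_eq_nil_iff] at h; simpa using h m hm
  have h1 : (l.takeWhile (fun y => y ≠ m)).length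
      + (l.dropWhile (fun y => y ≠ m)).length = l.length := by
    rw [← List.length_append, List.takeWhile_append_dropWhile]
  have h2 : 0 < (l.dropWhile (fun y => y ≠ m)).length := List.length_pos_iff.mpr hd
  omega
theorem dropWhileDropLt (l : List ℕ) (m : ℕ) (hl : l ≠ []) :
    ((l.dropWhile (fun y => y ≠ m)).drop 1).length < l.length := by
  have h1 : (l.takeWhile (fun y => y ≠ m)).length
      + (l.dropWhile (fun y => y ≠ m)).length = l.length := by
    rw [← List.length_append, List.takeWhile_append_dropWhile]
  have h2 : 0 < l.length := List.length_pos_iff.mpr hl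
  rw [List.length_drop]; omega

/-- West's stack-sorting map `s`: `s([]) = []`, `s(L m R) = s(L) s(R) m` for `m` the maximum. -/
def ss : List ℕ → List ℕ
  | [] => []
  | x :: xs =>
    ss ((x :: xs).takeWhile (fun y => y ≠ (x :: xs).foldr max 0)) ++
    ss (((x :: xs).dropWhile (fun y => y ≠ (x :: xs).foldr max 0)).drop 1) ++
    [(x :: xs).foldr max 0]
termination_by l => l.length
decreasing_by
  · exact takeWhileLt _ _ (foldrMaxMem _ _)
  · exact dropWhileDropLt _ _ (by simp)

/-- `met π` : the least `k ≥ 0` with `s^k(π)` increasing. -/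
def met (l : List ℕ) : ℕ := sInf {k | List.Pairwise (· < ·) (ss^[k] l)}

/-- Right-to-left maxima of a list, read from left to right.  For the prefix of `s^{i-1}(π)`
before `0` this is exactly the column sequence `C_{π,i}`. -/
def rtlMax : List ℕ → List ℕ
  | [] => []
  | x :: xs => if ∀ y ∈ xs, y < x then x :: rtlMax xs else rtlMax xs

/-- The blocks `b_{π,i,j}`: the segments strictly between consecutive right-to-left maxima. -/
def blocksOf : List ℕ → List (List ℕ)
  | [] => []
  | x :: xs =>
    if ∀ y ∈ xs, y < x then [] :: blocksOf xs
    else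
      match blocksOf xs with
      | [] => [[x]]
      | b :: bs => (x :: b) :: bs

/-- The part of `s^{i-1}(π)` strictly before the entry `0`. -/
def prefixAt (π : List ℕ) (i : ℕ) : List ℕ := (ss^[i-1] π).takeWhile (fun x => x ≠ 0)

/-- The column sequence `C_{π,i}`. -/
def colSeqAt (π : List ℕ) (i : ℕ) : List ℕ := rtlMax (prefixAt π i)

/-- The block sequence `B_{π,i}`. -/
def blocksAt (π : List ℕ) (i : ℕ) : List (List ℕ) := blocksOf (prefixAt π i)

/-- `col_π(v)`: the unique `i` with `v ∈ C_{π,i}` (as the least such `i ≥ 1`). -/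
def colOf (π : List ℕ) (v : ℕ) : ℕ := sInf {i | 1 ≤ i ∧ v ∈ colSeqAt π i}

/-- `colpos_π(v)`: the (1-indexed) position of `v` in `C_{π,col_π(v)}`. -/
def colposOf (π : List ℕ) (v : ℕ) : ℕ := (colSeqAt π (colOf π v)).idxOf v + 1

/-- `leftof_π(v) = c_{π,col_π(v)-1,j}` for the unique `j` with `v = max(b_{π,col_π(v)-1,j})`. -/
def leftOf (π : List ℕ) (v : ℕ) : ℕ :=
  (colSeqAt π (colOf π v - 1)).getD
    (((blocksAt π (colOf π v - 1)).map (fun b => b.foldr max 0)).idxOf v) 0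

/-- `row_π(v)`: follow `leftof` back to column 1 and take `colpos` there. -/
def rowOf (π : List ℕ) (v : ℕ) : ℕ := colposOf π ((leftOf π)^[colOf π v - 1] v)

/-- `upof_π(v) = c_{π,col_π(v),colpos_π(v)-1}`. -/
def upOf (π : List ℕ) (v : ℕ) : ℕ := (colSeqAt π (colOf π v)).getD (colposOf π v - 2) 0

/-- The stack-sorting tableau `T_π(v) = (col_π(v), row_π(v))`. -/
def Tmap (π : List ℕ) (v : ℕ) : ℕ × ℕ := (colOf π v, rowOf π v)

/-- The composition `α_π = (|{v ∈ [n] : row_π(v) = j}|)_{j=1}^{|C_{π,1}|}` (here `n = |π| - 1`). -/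
def alphaOf (π : List ℕ) : List ℕ :=
  (List.range' 1 (colSeqAt π 1).length).map
    (fun j => ((Finset.Icc 1 (π.length - 1)).filter (fun v => rowOf π v = j)).card)

/-- Membership in the composition diagram `D(α) = {(i,j) : 1 ≤ j ≤ ℓ(α), 1 ≤ i ≤ α_j}`. -/
def inDiagram (α : List ℕ) (p : ℕ × ℕ) : Prop :=
  1 ≤ p.1 ∧ 1 ≤ p.2 ∧ p.2 ≤ α.length ∧ p.1 ≤ α.getD (p.2 - 1) 0

instance inDiagramDec (α : List ℕ) : DecidablePred (inDiagram α) := fun p => by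
  unfold inDiagram; infer_instance

/-- `D(α)` as a finite set. -/
def diagramFinset (α : List ℕ) : Finset (ℕ × ℕ) :=
  (Finset.range (α.foldr max 0 + 1) ×ˢ Finset.range (α.length + 1)).filter
    (fun p => inDiagram α p)

/-- `colpos_α(i,j) = |{(i,j') ∈ D(α) : j' < j} ∪ {(i,0)}|`. -/
def colposA (α : List ℕ) (p : ℕ × ℕ) : ℕ :=
  (((Finset.range p.2).filter (fun j' => inDiagram α (p.1, j'))) ∪ {0}).card

/-- `leftof_α(i,j) = (i-1,j)`. -/
def leftA (p : ℕ × ℕ) : ℕ × ℕ := (p.1 - 1, p.2)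

/-- `upof_α(i,j) = (i, max({j' < j : (i,j') ∈ D(α)} ∪ {0}))`. -/
def upA (α : List ℕ) (p : ℕ × ℕ) : ℕ × ℕ :=
  (p.1, (((Finset.range p.2).filter (fun j' => inDiagram α (p.1, j'))) ∪ {0}).sup id)

/-- The hook length `h_α(i,j)`. -/
def hook (α : List ℕ) (p : ℕ × ℕ) : ℕ :=
  if 1 < p.1 then
    ((diagramFinset α).filter (fun q =>
      q.1 ≤ p.1 - 1 ∧ (upA α (p.1 - 1, p.2)).2 < q.2 ∧ q.2 ≤ p.2)).card
  else 1

/-- The segment `B_{π,T}(i,j,k)` of `s^{k-1}(π)`, where `U = T⁻¹`. -/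
def Bseg (π : List ℕ) (α : List ℕ) (U : ℕ × ℕ → ℕ) (i j k : ℕ) : List ℕ :=
  if (upA α (leftA (i, j))).2 > 0 then
    ((ss^[k-1] π).take ((ss^[k-1] π).idxOf (U (k, j)) + 1)).drop
      ((ss^[k-1] π).idxOf (U (k, (upA α (leftA (i, j))).2)) + 1)
  else
    (ss^[k-1] π).take ((ss^[k-1] π).idxOf (U (k, j)) + 1)

/-- The inverse `T_π⁻¹` of the stack-sorting tableau. -/
def invTmap (π : List ℕ) : ℕ × ℕ → ℕ :=
  Function.invFunOn (Tmap π) (Set.Icc 1 (π.length - 1))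

/-- A linear extension of `D(α)`, encoded as the list `[T(1), …, T(n)]`:
`T` is a bijection `{1,…,n} → D(α)` with `T(a) ≥_D T(b) → a ≥ b`. -/
def isLinExt (α : List ℕ) (ℓ : List (ℕ × ℕ)) : Prop :=
  ℓ.Nodup ∧ (∀ p, p ∈ ℓ ↔ inDiagram α p) ∧
  ∀ a b, a < ℓ.length → b < ℓ.length →
    (ℓ.getD a (0, 0)).1 ≤ (ℓ.getD b (0, 0)).1 ∧ (ℓ.getD a (0, 0)).2 ≤ (ℓ.getD b (0, 0)).2 →
    b ≤ a
end



lemma getD_eq_get' (l : List ℕ) (d : ℕ) {n : ℕ} (hn : n < l.length) :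
    l.getD n d = l.get ⟨n, hn⟩ := by
  simp [hn]

namespace St14

lemma le_foldrMax {l : List ℕ} {x : ℕ} (h : x ∈ l) : x ≤ l.foldr max 0 := by
  induction l with
  | nil => simp at h
  | cons a t ih =>
    rcases List.mem_cons.1 h with rfl | h'
    · simp
    · simp only [List.foldr_cons, le_max_iff]; exact Or.inr (ih h')
lemma foldrMax_le {l : List ℕ} {m : ℕ} (h : ∀ x ∈ l, x ≤ m) : l.foldr max 0 ≤ m := by
  induction l with
  | nil => simp
  | cons a t ih =>
    simp only [List.foldr_cons, max_le_iff]
    exact ⟨h a (by simp), ih fun x hx => h x (by simp [hx])⟩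
lemma foldrMax_eq {l : List ℕ} {m : ℕ} (hm : m ∈ l) (h : ∀ x ∈ l, x ≤ m) :
    l.foldr max 0 = m := le_antisymm (foldrMax_le h) (le_foldrMax hm)
lemma takeWhile_split {L R : List ℕ} {m : ℕ} (h : ∀ x ∈ L, x ≠ m) :
    (L ++ m :: R).takeWhile (fun y => y ≠ m) = L := by
  induction L with
  | nil => simp [List.takeWhile]
  | cons a t ih =>
    simp only [List.cons_append, List.takeWhile_cons]
    rw [if_pos (by simpa using h a (by simp))]
    rw [ih fun x hx => h x (by simp [hx])]
lemma dropWhile_split {L R : List ℕ} {m : ℕ} (h : ∀ x ∈ L, x ≠ m) :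
    (L ++ m :: R).dropWhile (fun y => y ≠ m) = m :: R := by
  induction L with
  | nil => simp [List.dropWhile]
  | cons a t ih =>
    simp only [List.cons_append, List.dropWhile_cons]
    rw [if_pos (by simpa using h a (by simp))]
    exact ih fun x hx => h x (by simp [hx])

lemma ss_eq (l : List ℕ) (hl : l ≠ []) :
    ss l = ss (l.takeWhile (fun y => y ≠ l.foldr max 0)) ++
      ss ((l.dropWhile (fun y => y ≠ l.foldr max 0)).drop 1) ++ [l.foldr max 0] := by
  cases l with
  | nil => simp at hl
  | cons x xs => rw [ss]

lemma ss_spec {L R : List ℕ} {m : ℕ} (hL : ∀ x ∈ L, x < m) (hR : ∀ x ∈ R, x < m) :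
    ss (L ++ m :: R) = ss L ++ ss R ++ [m] := by
  have hmax : (L ++ m :: R).foldr max 0 = m := by
    apply foldrMax_eq (by simp)
    intro x hx
    rcases List.mem_append.1 hx with h | h
    · exact le_of_lt (hL x h)
    · rcases List.mem_cons.1 h with rfl | h
      · exact le_rfl
      · exact le_of_lt (hR x h)
  rw [ss_eq _ (by simp), hmax,
    takeWhile_split (fun x hx => Nat.ne_of_lt (hL x hx)),
    dropWhile_split (fun x hx => Nat.ne_of_lt (hL x hx))]
  simp

lemma max_split (l : List ℕ) (hl : l ≠ []) :
    ∃ T D, l = T ++ l.foldr max 0 :: D ∧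
      l.takeWhile (fun y => y ≠ l.foldr max 0) = T ∧
      (l.dropWhile (fun y => y ≠ l.foldr max 0)).drop 1 = D := by
  obtain ⟨x, xs, rfl⟩ : ∃ x xs, l = x :: xs := by
    cases l with
    | nil => exact absurd rfl hl
    | cons x xs => exact ⟨x, xs, rfl⟩
  refine ⟨(x :: xs).takeWhile (fun y => y ≠ (x :: xs).foldr max 0),
    ((x :: xs).dropWhile (fun y => y ≠ (x :: xs).foldr max 0)).drop 1, ?_, rfl, rfl⟩
  have hmem : (x :: xs).foldr max 0 ∈ x :: xs := foldrMaxMem x xs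
  have hd : (x :: xs).dropWhile (fun y => y ≠ (x :: xs).foldr max 0) ≠ [] := by
    intro h; rw [List.dropWhile_eq_nil_iff] at h; simpa using h _ hmem
  obtain ⟨d, ds, hds⟩ : ∃ d ds,
      (x :: xs).dropWhile (fun y => y ≠ (x :: xs).foldr max 0) = d :: ds := by
    cases h : (x :: xs).dropWhile (fun y => y ≠ (x :: xs).foldr max 0) with
    | nil => exact absurd h hd
    | cons d ds => exact ⟨d, ds, rfl⟩
  have hdm : d = (x :: xs).foldr max 0 := by
    have := List.head?_dropWhile_not (fun y => y ≠ (x :: xs).foldr max 0) (x :: xs)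
    rw [hds] at this
    exact not_not.mp (of_decide_eq_false this)
  conv_lhs => rw [← List.takeWhile_append_dropWhile
    (p := fun y => y ≠ (x :: xs).foldr max 0) (l := x :: xs)]
  rw [hds, hdm]
  simp

lemma ss_perm' : ∀ (n : ℕ) (l : List ℕ), l.length = n → (ss l).Perm l := by
  intro n
  induction n using Nat.strong_induction_on with
  | _ n ih =>
  intro l hn
  rcases eq_or_ne l [] with rfl | hlne
  · simp [ss]
  obtain ⟨T, D, hTD, hT, hD⟩ := max_split l hlne
  have hmem : l.foldr max 0 ∈ l := by
    have : l.foldr max 0 ∈ T ++ l.foldr max 0 :: D := by simp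
    rwa [← hTD] at this
  have h1 : (ss T).Perm T := by
    apply ih T.length _ T rfl
    rw [← hT, ← hn]; exact takeWhileLt l _ hmem
  have h2 : (ss D).Perm D := by
    apply ih D.length _ D rfl
    rw [← hD, ← hn]; exact dropWhileDropLt l _ hlne
  have e1 : ss l = ss T ++ ss D ++ [l.foldr max 0] := by
    rw [ss_eq l hlne, hT, hD]
  rw [e1]
  refine (((h1.append h2).append (List.Perm.refl _)).trans ?_)
  refine (List.perm_append_singleton _ _).trans ?_
  conv_rhs => rw [hTD]
  exact List.perm_middle.symm

lemma ss_perm (l : List ℕ) : (ss l).Perm l := ss_perm' l.length l rfl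

lemma mem_ss {l : List ℕ} {x : ℕ} : x ∈ ss l ↔ x ∈ l := (ss_perm l).mem_iff

lemma ss_nodup {l : List ℕ} (h : l.Nodup) : (ss l).Nodup := ((ss_perm l).nodup_iff).mpr h

lemma ss_decomp {b : List ℕ} (hb : b ≠ []) (hnd : b.Nodup) :
    ∃ u, ss b = u ++ [b.foldr max 0] ∧ (∀ x ∈ u, x < b.foldr max 0) := by
  obtain ⟨T, D, hTD, hT, hD⟩ := max_split b hb
  refine ⟨ss T ++ ss D, by rw [ss_eq b hb, hT, hD], ?_⟩
  have hnotin : b.foldr max 0 ∉ T ∧ b.foldr max 0 ∉ D := by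
    have h2 := hnd
    rw [hTD, List.nodup_middle, List.nodup_cons] at h2
    exact ⟨fun h => h2.1 (List.mem_append.2 (Or.inl h)),
      fun h => h2.1 (List.mem_append.2 (Or.inr h))⟩
  intro x hx
  have hxb : x ∈ T ∨ x ∈ D := by
    rcases List.mem_append.1 hx with h | h
    · exact Or.inl (mem_ss.1 h)
    · exact Or.inr (mem_ss.1 h)
  have hxmem : x ∈ b := by
    rw [hTD]
    rcases hxb with h | h
    · exact List.mem_append.2 (Or.inl h)
    · simp [h]
  have hle : x ≤ b.foldr max 0 := le_foldrMax hxmem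
  have hne : x ≠ b.foldr max 0 := by
    rintro rfl
    rcases hxb with h | h
    · exact hnotin.1 h
    · exact hnotin.2 h
  omega

lemma rtlMax_subset {l : List ℕ} : ∀ x ∈ rtlMax l, x ∈ l := by
  induction l with
  | nil => simp [rtlMax]
  | cons a t ih =>
    intro x hx
    rw [rtlMax] at hx
    split_ifs at hx with h
    · rcases List.mem_cons.1 hx with rfl | hx
      · simp
      · exact List.mem_cons_of_mem _ (ih x hx)
    · exact List.mem_cons_of_mem _ (ih x hx)

lemma rtlMax_ne_nil {l : List ℕ} (h : l ≠ []) : rtlMax l ≠ [] := by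
  induction l with
  | nil => exact absurd rfl h
  | cons a t ih =>
    rw [rtlMax]
    split_ifs with hd
    · simp
    · have ht : t ≠ [] := by
        rintro rfl; exact hd (by simp)
      exact ih ht

lemma rtlMax_sorted {l : List ℕ} : (rtlMax l).Pairwise (· > ·) := by
  induction l with
  | nil => simp [rtlMax]
  | cons a t ih =>
    rw [rtlMax]
    split_ifs with h
    · exact List.pairwise_cons.2 ⟨fun b hb => h b (rtlMax_subset b hb), ih⟩
    · exact ih

lemma rtlMax_nodup {l : List ℕ} : (rtlMax l).Nodup := rtlMax_sorted.nodup

lemma rtlMax_append {xs ys : List ℕ} :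
    rtlMax (xs ++ ys) =
      (rtlMax xs).filter (fun x => decide (∀ y ∈ ys, y < x)) ++ rtlMax ys := by
  induction xs with
  | nil => simp [rtlMax]
  | cons a t ih =>
    simp only [List.cons_append]
    rw [rtlMax, rtlMax]
    by_cases hA : ∀ y ∈ t, y < a
    · by_cases hB : ∀ y ∈ ys, y < a
      · have hAB : ∀ y ∈ t ++ ys, y < a := by
          intro y hy
          rcases List.mem_append.1 hy with h | h
          · exact hA y h
          · exact hB y h
        rw [if_pos hAB, if_pos hA, ih]
        simp only [List.filter_cons, decide_eq_true_eq]
        rw [if_pos hB]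
        simp
      · have hAB : ¬ ∀ y ∈ t ++ ys, y < a := by
          intro hAll; exact hB fun y hy => hAll y (by simp [hy])
        rw [if_neg hAB, if_pos hA, ih]
        simp only [List.filter_cons, decide_eq_true_eq]
        rw [if_neg hB]
    · have hAB : ¬ ∀ y ∈ t ++ ys, y < a := by
        intro hAll; exact hA fun y hy => hAll y (by simp [hy])
      rw [if_neg hAB, if_neg hA, ih]

lemma blocksOf_length {l : List ℕ} : (blocksOf l).length = (rtlMax l).length := by
  induction l with
  | nil => simp [blocksOf, rtlMax]
  | cons a t ih =>
    rw [blocksOf, rtlMax]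
    split_ifs with h
    · simp [ih]
    · have ht : t ≠ [] := by rintro rfl; exact h (by simp)
      have hb : blocksOf t ≠ [] := by
        intro hb
        have := rtlMax_ne_nil ht
        rw [← List.length_pos_iff] at this
        rw [hb] at ih
        simp at ih
        omega
      cases hbt : blocksOf t with
      | nil => exact absurd hbt hb
      | cons b bs =>
        simp only [List.length_cons]
        rw [hbt] at ih
        simpa using ih

lemma blocksOf_max_split {L R : List ℕ} {m : ℕ} (hL : ∀ x ∈ L, x < m)
    (hR : ∀ x ∈ R, x < m) : blocksOf (L ++ m :: R) = L :: blocksOf R := by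
  induction L with
  | nil =>
    simp only [List.nil_append]
    rw [blocksOf, if_pos hR]
  | cons a t ih =>
    have ihh := ih fun x hx => hL x (by simp [hx])
    simp only [List.cons_append]
    rw [blocksOf]
    rw [if_neg (by
      intro hAll
      have := hAll m (by simp)
      have := hL a (by simp)
      omega)]
    rw [ihh]

lemma rtlMax_max_split {L R : List ℕ} {m : ℕ} (hL : ∀ x ∈ L, x < m)
    (hR : ∀ x ∈ R, x < m) : rtlMax (L ++ m :: R) = m :: rtlMax R := by
  rw [rtlMax_append]
  have h1 : (rtlMax L).filter (fun x => decide (∀ y ∈ m :: R, y < x)) = [] := by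
    rw [List.filter_eq_nil_iff]
    intro x hx
    have hxm := hL x (rtlMax_subset x hx)
    simp only [decide_eq_true_eq]
    intro hAll
    exact absurd (hAll m (by simp)) (by omega)
  rw [h1, rtlMax, if_pos hR]
  simp

lemma rtlMax_ss {b : List ℕ} (hb : b ≠ []) (hnd : b.Nodup) :
    rtlMax (ss b) = [b.foldr max 0] := by
  obtain ⟨u, hu, hlt⟩ := ss_decomp hb hnd
  rw [hu, rtlMax_max_split hlt (by simp)]
  simp [rtlMax]

lemma join_blocksOf_subset {l : List ℕ} : ∀ x ∈ (blocksOf l).flatten, x ∈ l := by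
  induction l with
  | nil => simp [blocksOf]
  | cons a t ih =>
    intro x hx
    rw [blocksOf] at hx
    split_ifs at hx with h
    · simp only [List.flatten_cons, List.nil_append] at hx
      exact List.mem_cons_of_mem _ (ih x hx)
    · cases hbt : blocksOf t with
      | nil =>
        rw [hbt] at hx
        simp at hx
        simp [hx]
      | cons b bs =>
        rw [hbt] at hx
        simp only [List.flatten_cons, List.cons_append, List.mem_cons] at hx
        rcases hx with rfl | hx
        · simp
        · refine List.mem_cons_of_mem _ (ih x ?_)
          rw [hbt]
          simpa using hx

lemma mem_join_blocksOf {l : List ℕ} (hnd : l.Nodup) {v : ℕ} :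
    v ∈ (blocksOf l).flatten ↔ v ∈ l ∧ v ∉ rtlMax l := by
  induction l with
  | nil => simp [blocksOf, rtlMax]
  | cons a t ih =>
    have hat : a ∉ t := (List.nodup_cons.1 hnd).1
    have ihh := ih (List.nodup_cons.1 hnd).2
    rw [blocksOf, rtlMax]
    split_ifs with h
    · simp only [List.flatten_cons, List.nil_append, List.mem_cons]
      rw [ihh]
      constructor
      · rintro ⟨hv, hnv⟩
        exact ⟨Or.inr hv, by
          rintro (rfl | hc)
          · exact hat hv
          · exact hnv hc⟩
      · rintro ⟨hv | hv, hnv⟩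
        · subst hv
          exact absurd (Or.inl rfl) hnv
        · exact ⟨hv, fun hc => hnv (Or.inr hc)⟩
    · have ht : t ≠ [] := by rintro rfl; exact h (by simp)
      have hbne : blocksOf t ≠ [] := by
        intro hb
        have h1 := rtlMax_ne_nil ht
        have h2 := blocksOf_length (l := t)
        rw [hb] at h2
        exact h1 (List.length_eq_zero_iff.1 h2.symm)
      cases hbt : blocksOf t with
      | nil => exact absurd hbt hbne
      | cons b bs =>
        simp only [List.flatten_cons, List.cons_append, List.mem_cons]
        have hjoin : v ∈ b ++ bs.flatten ↔ v ∈ (blocksOf t).flatten := by rw [hbt]; simp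
        rw [List.mem_append] at hjoin ⊢
        constructor
        · rintro (rfl | hv)
          · refine ⟨Or.inl rfl, fun hc => hat (rtlMax_subset _ hc)⟩
          · have := ihh.1 (hjoin.1 hv)
            exact ⟨Or.inr this.1, this.2⟩
        · rintro ⟨rfl | hv, hnv⟩
          · exact Or.inl rfl
          · exact Or.inr (hjoin.2 (ihh.2 ⟨hv, hnv⟩))

lemma sorted_append_singleton {Q : List ℕ} {m : ℕ} (h : Q.Pairwise (· < ·))
    (hm : ∀ x ∈ Q, x < m) : (Q ++ [m]).Pairwise (· < ·) := by
  rw [List.pairwise_append]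
  exact ⟨h, by simp, fun a ha b hb => by simp only [List.mem_singleton] at hb; exact hb ▸ hm a ha⟩

lemma lemA : ∀ (n : ℕ) (P Q : List ℕ), (P ++ 0 :: Q).length = n →
    (∀ x ∈ P, 0 < x) → (∀ x ∈ Q, 0 < x) → (P ++ 0 :: Q).Nodup → Q.Pairwise (· < ·) →
    ∃ Q', ss (P ++ 0 :: Q) = ((blocksOf P).map ss).flatten ++ 0 :: Q' ∧
      Q'.Pairwise (· < ·) ∧ Q'.Perm (rtlMax P ++ Q) := by
  intro n
  induction n using Nat.strong_induction_on with
  | _ n ih =>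
  intro P Q hn hP hQ hnd hsort
  rcases eq_or_ne (P ++ Q) [] with hPQ | hPQ
  · obtain ⟨rfl, rfl⟩ : P = [] ∧ Q = [] := by
      constructor <;> [exact List.append_eq_nil_iff.1 hPQ |>.1; exact List.append_eq_nil_iff.1 hPQ |>.2]
    refine ⟨[], ?_, by simp, by simp [rtlMax]⟩
    have : ss ([] ++ 0 :: []) = ss [] ++ ss [] ++ [0] := ss_spec (by simp) (by simp)
    simpa [ss, blocksOf] using this
  · set l := P ++ 0 :: Q with hl
    set m := l.foldr max 0 with hm
    have hmeml : m ∈ l := by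
      rcases eq_or_ne l [] with h | h
      · simp [hl] at h
      · obtain ⟨x, xs, hx⟩ : ∃ x xs, l = x :: xs := by
          cases hle : l with
          | nil => exact absurd hle h
          | cons x xs => exact ⟨x, xs, rfl⟩
        rw [hm, hx]; exact foldrMaxMem x xs
    have hmpos : 0 < m := by
      obtain ⟨w, hw⟩ : ∃ w, (w ∈ P ∨ w ∈ Q) ∧ 0 < w := by
        cases hPe : P with
        | cons p ps => exact ⟨p, Or.inl (by simp), hP p (by simp [hPe])⟩
        | nil =>
          cases hQe : Q with
          | nil => rw [hPe, hQe] at hPQ; simp at hPQ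
          | cons q qs => exact ⟨q, Or.inr (by simp [hQe]), hQ q (by simp [hQe])⟩
      have hwl : w ∈ l := by
        rcases hw.1 with h | h
        · exact List.mem_append.2 (Or.inl h)
        · simp [hl, h]
      have := le_foldrMax (l := l) hwl
      omega
    have hstrict : ∀ x ∈ l, x ≠ m → x < m := fun x hx hne =>
      lt_of_le_of_ne (le_foldrMax hx) hne
    have hmP_or_Q : m ∈ P ∨ m ∈ Q := by
      rcases List.mem_append.1 hmeml with h | h
      · exact Or.inl h
      · rcases List.mem_cons.1 h with h | h
        · omega
        · exact Or.inr h
    rcases hmP_or_Q with hmP | hmQ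
    · -- max inside P
      obtain ⟨P₁, P₂, hPsplit⟩ := List.append_of_mem hmP
      have hlsplit : l = P₁ ++ m :: (P₂ ++ 0 :: Q) := by
        rw [hl, hPsplit]; simp
      have hmcount : m ∉ P₁ ∧ m ∉ P₂ ∧ m ∉ Q := by
        have h1 : (P₁ ++ m :: (P₂ ++ 0 :: Q)).Nodup := hlsplit ▸ hnd
        rw [List.nodup_middle, List.nodup_cons] at h1
        refine ⟨fun hc => h1.1 (by simp [hc]), fun hc => h1.1 (by simp [hc]),
          fun hc => h1.1 (by simp [hc])⟩
      have hmemP₁ : ∀ x ∈ P₁, x ∈ l := fun x hx => by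
        rw [hlsplit]; simp [hx]
      have hmemP₂ : ∀ x ∈ P₂, x ∈ l := fun x hx => by
        rw [hlsplit]; simp [hx]
      have hmemQ : ∀ x ∈ Q, x ∈ l := fun x hx => by
        rw [hlsplit]; simp [hx]
      have hP₁lt : ∀ x ∈ P₁, x < m := fun x hx =>
        hstrict x (hmemP₁ x hx) (fun he => hmcount.1 (he ▸ hx))
      have hP₂lt : ∀ x ∈ P₂, x < m := fun x hx =>
        hstrict x (hmemP₂ x hx) (fun he => hmcount.2.1 (he ▸ hx))
      have hQlt : ∀ x ∈ Q, x < m := fun x hx =>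
        hstrict x (hmemQ x hx) (fun he => hmcount.2.2 (he ▸ hx))
      have hRlt : ∀ x ∈ P₂ ++ 0 :: Q, x < m := by
        intro x hx
        rcases List.mem_append.1 hx with h | h
        · exact hP₂lt x h
        · rcases List.mem_cons.1 h with rfl | h
          · exact hmpos
          · exact hQlt x h
      have hss : ss l = ss P₁ ++ ss (P₂ ++ 0 :: Q) ++ [m] := by
        rw [hlsplit]
        exact ss_spec hP₁lt hRlt
      have hlen : (P₂ ++ 0 :: Q).length < n := by
        have : l.length = P₁.length + 1 + (P₂ ++ 0 :: Q).length := by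
          rw [hlsplit]; simp; omega
        omega
      have hnd₂ : (P₂ ++ 0 :: Q).Nodup := by
        have h1 : (P₁ ++ m :: (P₂ ++ 0 :: Q)).Nodup := hlsplit ▸ hnd
        exact ((List.nodup_append'.1 h1).2.1).of_cons
      obtain ⟨Q'', hss2, hsort2, hperm2⟩ := ih _ hlen P₂ Q rfl
        (fun x hx => hP x (by simp [hPsplit, hx])) hQ hnd₂ hsort
      refine ⟨Q'' ++ [m], ?_, ?_, ?_⟩
      · rw [hss, hss2, hPsplit, blocksOf_max_split hP₁lt hP₂lt]
        simp
      · refine sorted_append_singleton hsort2 ?_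
        intro a ha
        have haPQ : a ∈ rtlMax P₂ ++ Q := hperm2.subset ha
        rcases List.mem_append.1 haPQ with h | h
        · exact hP₂lt a (rtlMax_subset a h)
        · exact hQlt a h
      · refine (hperm2.append (List.Perm.refl [m])).trans ?_
        rw [hPsplit, rtlMax_max_split hP₁lt hP₂lt]
        exact List.perm_append_singleton m _
    · -- max inside Q
      have hQne : Q ≠ [] := by rintro rfl; simp at hmQ
      set Q₀ := Q.dropLast with hQ₀
      set q := Q.getLast hQne with hq
      have hQdecomp : Q = Q₀ ++ [q] := (List.dropLast_append_getLast hQne).symm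
      have hndQ : Q.Nodup := by
        rw [hl] at hnd
        exact ((List.nodup_append'.1 hnd).2.1).of_cons
      have hmq : m = q := by
        have h1 : q ≤ m := le_foldrMax (by simp [hl, hq, List.getLast_mem hQne])
        have h2 : m ≤ q := by
          have hmQ' : m ∈ Q₀ ++ [q] := hQdecomp ▸ hmQ
          rcases List.mem_append.1 hmQ' with h | h
          · have hs := hsort
            rw [hQdecomp, List.pairwise_append] at hs
            exact le_of_lt (hs.2.2 m h q (by simp))
          · simp only [List.mem_singleton] at h
            exact h.le
        omega
      have hmnotP : m ∉ P := by
        have h1 := hnd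
        rw [hl, List.nodup_append'] at h1
        intro hc
        exact h1.2.2 hc (by simp [hmQ])
      have hmnotQ₀ : m ∉ Q₀ := by
        intro hc
        have h1 : (Q₀ ++ [q]).Nodup := hQdecomp ▸ hndQ
        rcases List.nodup_append'.1 h1 with ⟨_, _, hdisj⟩
        exact hdisj hc (by simp [hmq])
      have hL0lt : ∀ x ∈ P ++ 0 :: Q₀, x < m := by
        intro x hx
        rcases List.mem_append.1 hx with h | h
        · exact hstrict x (by simp [hl, h]) (fun he => hmnotP (he ▸ h))
        · rcases List.mem_cons.1 h with rfl | h
          · exact hmpos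
          · refine hstrict x ?_ (fun he => hmnotQ₀ (he ▸ h))
            have : x ∈ Q := hQdecomp ▸ List.mem_append.2 (Or.inl h)
            simp [hl, this]
      have hss : ss l = ss (P ++ 0 :: Q₀) ++ [m] := by
        have heq : l = (P ++ 0 :: Q₀) ++ m :: ([] : List ℕ) := by
          rw [hl, hmq, hQdecomp]
          simp
        rw [heq, ss_spec hL0lt (by simp)]
        simp [ss]
      have hlen : (P ++ 0 :: Q₀).length < n := by
        rw [← hn, hl, hQdecomp]
        simp
      have hnd₀ : (P ++ 0 :: Q₀).Nodup := by
        have : l.Nodup := hnd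
        rw [hl, hQdecomp] at this
        have h2 : ((P ++ 0 :: Q₀) ++ [q]).Nodup := by
          rw [show (P ++ 0 :: Q₀) ++ [q] = P ++ 0 :: (Q₀ ++ [q]) by simp]
          exact this
        exact (List.nodup_append'.1 h2).1
      have hsort₀ : Q₀.Pairwise (· < ·) := by
        have := hsort
        rw [hQdecomp, List.pairwise_append] at this
        exact this.1
      obtain ⟨Q'', hss2, hsort2, hperm2⟩ := ih _ hlen P Q₀ rfl hP
        (fun x hx => hQ x (hQdecomp ▸ List.mem_append.2 (Or.inl hx))) hnd₀ hsort₀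
      refine ⟨Q'' ++ [m], ?_, ?_, ?_⟩
      · rw [hss, hss2]
        simp
      · refine sorted_append_singleton hsort2 ?_
        intro a ha
        have haPQ : a ∈ rtlMax P ++ Q₀ := hperm2.subset ha
        rcases List.mem_append.1 haPQ with h | h
        · exact hL0lt a (List.mem_append.2 (Or.inl (rtlMax_subset a h)))
        · exact hL0lt a (List.mem_append.2 (Or.inr (by simp [h])))
      · refine (hperm2.append (List.Perm.refl [m])).trans ?_
        rw [List.append_assoc, hmq, ← hQdecomp]


def Qtail (π : List ℕ) (i : ℕ) : List ℕ :=
  ((ss^[i-1] π).dropWhile (fun x => x ≠ 0)).drop 1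

def GoodAt (π : List ℕ) (i : ℕ) : Prop :=
  ss^[i-1] π = prefixAt π i ++ 0 :: Qtail π i ∧
  (∀ x ∈ prefixAt π i, 0 < x) ∧ (∀ x ∈ Qtail π i, 0 < x) ∧
  (ss^[i-1] π).Nodup ∧ (Qtail π i).Pairwise (· < ·)

lemma prefix_Qtail_eq {σ P Q : List ℕ} (h : σ = P ++ 0 :: Q) (hP : ∀ x ∈ P, 0 < x) :
    σ.takeWhile (fun x => x ≠ 0) = P ∧ (σ.dropWhile (fun x => x ≠ 0)).drop 1 = Q := by
  subst h
  constructor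
  · exact takeWhile_split fun x hx => Nat.pos_iff_ne_zero.1 (hP x hx)
  · rw [dropWhile_split fun x hx => Nat.pos_iff_ne_zero.1 (hP x hx)]
    simp

lemma nodup_length_le {l₁ l₂ : List ℕ} (h : l₁.Nodup) (hs : l₁ ⊆ l₂) :
    l₁.length ≤ l₂.length := (List.subperm_of_subset h hs).length_le

lemma mem_join_map_ss {bs : List (List ℕ)} {x : ℕ} :
    x ∈ ((bs.map ss).flatten) ↔ x ∈ bs.flatten := by
  simp only [List.mem_flatten, List.mem_map]
  constructor
  · rintro ⟨l, ⟨b, hb, rfl⟩, hx⟩; exact ⟨b, hb, mem_ss.1 hx⟩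
  · rintro ⟨b, hb, hx⟩; exact ⟨ss b, ⟨b, hb, rfl⟩, mem_ss.2 hx⟩

section Dyn
variable {n : ℕ} {π : List ℕ}

lemma pi_ne_nil (h0 : π.getLast? = some 0) : π ≠ [] := by
  rintro rfl; simp at h0

lemma pi_decomp (h0 : π.getLast? = some 0) : π = π.dropLast ++ [0] := by
  have hne := pi_ne_nil h0
  rw [List.getLast?_eq_getLast hne, Option.some_inj] at h0
  conv_lhs => rw [← List.dropLast_append_getLast hne]
  rw [h0]

lemma pi_nodup (hπ : π.Perm (List.range (n + 1))) : π.Nodup :=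
  (hπ.nodup_iff).2 List.nodup_range

lemma goodAt_one (hπ : π.Perm (List.range (n + 1))) (h0 : π.getLast? = some 0) :
    GoodAt π 1 := by
  have hnd := pi_nodup hπ
  have hdec := pi_decomp h0
  have hnotin : (0 : ℕ) ∉ π.dropLast := by
    have h2 : (π.dropLast ++ [0]).Nodup := hdec ▸ hnd
    rcases List.nodup_append'.1 h2 with ⟨_, _, hdisj⟩
    intro hc
    exact hdisj hc (by simp)
  have hpos : ∀ x ∈ π.dropLast, 0 < x := fun x hx =>
    Nat.pos_of_ne_zero (fun he => hnotin (he ▸ hx))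
  have hσ : ss^[1-1] π = π.dropLast ++ 0 :: ([] : List ℕ) := by
    simpa using hdec
  obtain ⟨hpre, hqt⟩ := prefix_Qtail_eq hσ hpos
  refine ⟨?_, ?_, ?_, ?_, ?_⟩
  · rw [show prefixAt π 1 = π.dropLast from hpre, show Qtail π 1 = [] from hqt]
    exact hσ
  · rw [show prefixAt π 1 = π.dropLast from hpre]; exact hpos
  · rw [show Qtail π 1 = [] from hqt]; simp
  · simpa using hnd
  · rw [show Qtail π 1 = [] from hqt]; simp

lemma goodAt_step {i : ℕ} (hi : 1 ≤ i) (h : GoodAt π i) :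
    GoodAt π (i + 1) ∧ prefixAt π (i + 1) = ((blocksAt π i).map ss).flatten ∧
      (Qtail π (i + 1)).Perm (colSeqAt π i ++ Qtail π i) := by
  obtain ⟨hsplit, hPpos, hQpos, hnd, hsort⟩ := h
  have hndPQ : (prefixAt π i ++ 0 :: Qtail π i).Nodup := hsplit ▸ hnd
  obtain ⟨Q', hss, hsort', hperm'⟩ :=
    lemA _ (prefixAt π i) (Qtail π i) rfl hPpos hQpos hndPQ hsort
  have hit : ss^[(i+1)-1] π = ss (ss^[i-1] π) := by
    rw [show (i+1)-1 = (i-1)+1 by omega, Function.iterate_succ_apply']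
  have hσ' : ss^[(i+1)-1] π = ((blocksAt π i).map ss).flatten ++ 0 :: Q' := by
    rw [hit]
    conv_lhs => rw [hsplit]
    exact hss
  have hJpos : ∀ x ∈ ((blocksAt π i).map ss).flatten, 0 < x := by
    intro x hx
    exact hPpos x (join_blocksOf_subset x (mem_join_map_ss.1 hx))
  obtain ⟨hpre, hqt⟩ := prefix_Qtail_eq hσ' hJpos
  have hpre' : prefixAt π (i+1) = ((blocksAt π i).map ss).flatten := hpre
  have hqt' : Qtail π (i+1) = Q' := hqt
  have hQ'pos : ∀ x ∈ Q', 0 < x := by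
    intro x hx
    rcases List.mem_append.1 (hperm'.subset hx) with h | h
    · exact hPpos x (rtlMax_subset x h)
    · exact hQpos x h
  refine ⟨⟨?_, ?_, ?_, ?_, ?_⟩, hpre', hqt' ▸ hperm'⟩
  · rw [hpre', hqt']; exact hσ'
  · rw [hpre']; exact hJpos
  · rw [hqt']; exact hQ'pos
  · rw [hit]; exact ss_nodup hnd
  · rw [hqt']; exact hsort'

lemma goodAt_all (hπ : π.Perm (List.range (n + 1))) (h0 : π.getLast? = some 0) :
    ∀ i, 1 ≤ i → GoodAt π i := by
  intro i hi
  induction i with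
  | zero => omega
  | succ j ih =>
    rcases Nat.eq_or_lt_of_le hi with h | h
    · rw [← h] at *
      exact goodAt_one hπ h0
    · have hj : 1 ≤ j := by omega
      exact (goodAt_step hj (ih hj)).1

variable (hπ : π.Perm (List.range (n + 1))) (h0 : π.getLast? = some 0)
include hπ h0

lemma prefix_succ (i : ℕ) (hi : 1 ≤ i) :
    prefixAt π (i + 1) = ((blocksAt π i).map ss).flatten :=
  (goodAt_step hi (goodAt_all hπ h0 i hi)).2.1

lemma Qtail_succ_perm (i : ℕ) (hi : 1 ≤ i) :
    (Qtail π (i + 1)).Perm (colSeqAt π i ++ Qtail π i) :=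
  (goodAt_step hi (goodAt_all hπ h0 i hi)).2.2

lemma prefix_nodup (i : ℕ) (hi : 1 ≤ i) : (prefixAt π i).Nodup := by
  obtain ⟨hsplit, _, _, hnd, _⟩ := goodAt_all hπ h0 i hi
  have := hsplit ▸ hnd
  exact (List.nodup_append'.1 this).1

lemma prefix_pos (i : ℕ) (hi : 1 ≤ i) : ∀ x ∈ prefixAt π i, 0 < x :=
  (goodAt_all hπ h0 i hi).2.1

lemma mem_prefix_succ (i : ℕ) (hi : 1 ≤ i) {v : ℕ} :
    v ∈ prefixAt π (i + 1) ↔ v ∈ prefixAt π i ∧ v ∉ colSeqAt π i := by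
  rw [prefix_succ hπ h0 i hi, mem_join_map_ss]
  exact mem_join_blocksOf (prefix_nodup hπ h0 i hi)

lemma mem_Qtail_succ (i : ℕ) (hi : 1 ≤ i) {v : ℕ} :
    v ∈ Qtail π (i + 1) ↔ v ∈ colSeqAt π i ∨ v ∈ Qtail π i := by
  rw [(Qtail_succ_perm hπ h0 i hi).mem_iff, List.mem_append]

lemma prefix_Qtail_disj (i : ℕ) (hi : 1 ≤ i) {v : ℕ} (hv : v ∈ prefixAt π i) :
    v ∉ Qtail π i := by
  obtain ⟨hsplit, _, _, hnd, _⟩ := goodAt_all hπ h0 i hi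
  have h2 := hsplit ▸ hnd
  rcases List.nodup_append'.1 h2 with ⟨_, _, hdisj⟩
  intro hc
  exact hdisj hv (by simp [hc])

lemma Qtail_mono {i j : ℕ} (hi : 1 ≤ i) (hij : i ≤ j) {v : ℕ}
    (hv : v ∈ Qtail π i) : v ∈ Qtail π j := by
  induction j with
  | zero => omega
  | succ k ih =>
    rcases Nat.eq_or_lt_of_le hij with h | h
    · rwa [← h]
    · have hik : i ≤ k := by omega
      exact (mem_Qtail_succ hπ h0 k (le_trans hi hik)).2 (Or.inr (ih hik))

lemma col_mem_Qtail_succ (i : ℕ) (hi : 1 ≤ i) {v : ℕ} (hv : v ∈ colSeqAt π i) :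
    v ∈ Qtail π (i + 1) := (mem_Qtail_succ hπ h0 i hi).2 (Or.inl hv)

lemma col_unique {i j : ℕ} (hi : 1 ≤ i) (hj : 1 ≤ j) {v : ℕ}
    (hvi : v ∈ colSeqAt π i) (hvj : v ∈ colSeqAt π j) : i = j := by
  by_contra hne
  wlog hlt : i < j generalizing i j
  · exact this hj hi hvj hvi (Ne.symm hne) (by omega)
  have h1 : v ∈ Qtail π j :=
    Qtail_mono hπ h0 (by omega) (by omega) (col_mem_Qtail_succ hπ h0 i hi hvi)
  exact prefix_Qtail_disj hπ h0 j hj (rtlMax_subset v hvj) h1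

lemma prefix_length_dec (i : ℕ) (hi : 1 ≤ i) (hne : prefixAt π i ≠ []) :
    (prefixAt π (i + 1)).length < (prefixAt π i).length := by
  obtain ⟨c, hc⟩ : ∃ c, c ∈ colSeqAt π i := by
    have := rtlMax_ne_nil hne
    cases h : colSeqAt π i with
    | nil => exact absurd h this
    | cons a t => exact ⟨a, by simp [h]⟩
  have hsub : prefixAt π (i + 1) ⊆ (prefixAt π i).erase c := by
    intro x hx
    obtain ⟨h1, h2⟩ := (mem_prefix_succ hπ h0 i hi).1 hx
    exact (List.Nodup.mem_erase_iff (prefix_nodup hπ h0 i hi)).2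
      ⟨fun he => h2 (he ▸ hc), h1⟩
  have hle := nodup_length_le (prefix_nodup hπ h0 (i+1) (by omega)) hsub
  have := List.length_erase_of_mem (rtlMax_subset c hc)
  have hpos : 0 < (prefixAt π i).length := List.length_pos_iff.2 hne
  omega

lemma col_exists' : ∀ (L : ℕ) (i : ℕ), 1 ≤ i → (prefixAt π i).length ≤ L →
    ∀ v ∈ prefixAt π i, ∃ j, i ≤ j ∧ v ∈ colSeqAt π j := by
  intro L
  induction L with
  | zero =>
    intro i hi hlen v hv
    have hz : prefixAt π i = [] := List.length_eq_zero_iff.1 (by omega)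
    rw [hz] at hv
    simp at hv
  | succ L ih =>
    intro i hi hlen v hv
    by_cases hc : v ∈ colSeqAt π i
    · exact ⟨i, le_rfl, hc⟩
    · have hv' : v ∈ prefixAt π (i + 1) := (mem_prefix_succ hπ h0 i hi).2 ⟨hv, hc⟩
      have hne : prefixAt π i ≠ [] := by
        rintro he; rw [he] at hv; simp at hv
      have hdec := prefix_length_dec hπ h0 i hi hne
      obtain ⟨j, hj1, hj2⟩ := ih (i + 1) (by omega) (by omega) v hv'
      exact ⟨j, by omega, hj2⟩

lemma prefix_one_eq : prefixAt π 1 = π.dropLast := by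
  have hnd := pi_nodup hπ
  have hdec := pi_decomp h0
  have hnotin : (0 : ℕ) ∉ π.dropLast := by
    have h2 : (π.dropLast ++ [0]).Nodup := hdec ▸ hnd
    rcases List.nodup_append'.1 h2 with ⟨_, _, hdisj⟩
    intro hc; exact hdisj hc (by simp)
  have hσ : ss^[1-1] π = π.dropLast ++ 0 :: ([] : List ℕ) := by simpa using hdec
  exact (prefix_Qtail_eq hσ (fun x hx => Nat.pos_of_ne_zero
    (fun he => hnotin (he ▸ hx)))).1

lemma mem_prefix_one {v : ℕ} (hv1 : 1 ≤ v) (hvn : v ≤ n) : v ∈ prefixAt π 1 := by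
  rw [prefix_one_eq hπ h0]
  have hvπ : v ∈ π := hπ.mem_iff.2 (List.mem_range.2 (by omega))
  have hdec := pi_decomp h0
  rw [hdec] at hvπ
  rcases List.mem_append.1 hvπ with h | h
  · exact h
  · simp at h; omega

lemma col_exists {v : ℕ} (hv1 : 1 ≤ v) (hvn : v ≤ n) :
    ∃ j, 1 ≤ j ∧ v ∈ colSeqAt π j := by
  obtain ⟨j, hj1, hj2⟩ := col_exists' hπ h0 (prefixAt π 1).length 1 le_rfl le_rfl v
    (mem_prefix_one hπ h0 hv1 hvn)
  exact ⟨j, hj1, hj2⟩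

lemma colOf_eq {v i : ℕ} (hi : 1 ≤ i) (hv : v ∈ colSeqAt π i) : colOf π v = i := by
  have hset : {j | 1 ≤ j ∧ v ∈ colSeqAt π j} = {i} := by
    ext j
    simp only [Set.mem_setOf_eq, Set.mem_singleton_iff]
    constructor
    · rintro ⟨hj1, hj2⟩
      exact col_unique hπ h0 hj1 hi hj2 hv
    · rintro rfl
      exact ⟨hi, hv⟩
  rw [colOf, hset, csInf_singleton]

end Dyn

def colsNext : List (List ℕ) → List ℕ
  | [] => []
  | b :: bs => if b ≠ [] ∧ ∀ y ∈ bs.flatten, y < b.foldr max 0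
      then b.foldr max 0 :: colsNext bs else colsNext bs

lemma maxL_mem {b : List ℕ} (hb : b ≠ []) : b.foldr max 0 ∈ b := by
  cases b with
  | nil => simp at hb
  | cons x xs => exact foldrMaxMem x xs

lemma join_blocksOf_sublist (l : List ℕ) : List.Sublist (blocksOf l).flatten l := by
  induction l with
  | nil => simp [blocksOf]
  | cons a t ih =>
    rw [blocksOf]
    split_ifs with h
    · simp only [List.flatten_cons, List.nil_append]
      exact ih.cons a
    · cases hbt : blocksOf t with
      | nil => simp
      | cons b bs =>
        rw [hbt] at ih
        simp only [List.flatten_cons, List.cons_append] at ih ⊢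
        exact ih.cons₂ a

lemma rtlMax_join_map_ss {bs : List (List ℕ)} (hnd : bs.flatten.Nodup) :
    rtlMax ((bs.map ss).flatten) = colsNext bs := by
  induction bs with
  | nil => simp [colsNext, rtlMax]
  | cons b t ih =>
    have hnd' : (b ++ t.flatten).Nodup := by simpa using hnd
    have hndb : b.Nodup := (List.nodup_append'.1 hnd').1
    have hndt : t.flatten.Nodup := (List.nodup_append'.1 hnd').2.1
    simp only [List.map_cons, List.flatten_cons]
    rw [rtlMax_append, ih hndt, colsNext]
    by_cases hb : b = []
    · subst hb
      rw [if_neg (by simp)]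
      simp [ss, rtlMax]
    · rw [rtlMax_ss hb hndb]
      have hiff : (∀ y ∈ (t.map ss).flatten, y < b.foldr max 0) ↔
          (∀ y ∈ t.flatten, y < b.foldr max 0) := by
        constructor
        · intro h y hy; exact h y (mem_join_map_ss.2 hy)
        · intro h y hy; exact h y (mem_join_map_ss.1 hy)
      by_cases hdom : ∀ y ∈ t.flatten, y < b.foldr max 0
      · rw [if_pos ⟨hb, hdom⟩]
        rw [List.filter_singleton, decide_eq_true (hiff.2 hdom), cond_true]
        simp
      · rw [if_neg (by tauto)]
        rw [List.filter_singleton, decide_eq_false (fun h => hdom (hiff.1 h)), cond_false]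
        simp

lemma colsNext_spec {bs : List (List ℕ)} {v : ℕ} (hv : v ∈ colsNext bs) :
    ∃ j, ∃ hj : j < bs.length, (bs.get ⟨j, hj⟩) ≠ [] ∧
      (bs.get ⟨j, hj⟩).foldr max 0 = v ∧
      ∀ j', ∀ hj' : j' < bs.length, j < j' → ∀ y ∈ bs.get ⟨j', hj'⟩, y < v := by
  induction bs generalizing v with
  | nil => simp [colsNext] at hv
  | cons b t ih =>
    rw [colsNext] at hv
    have hshift : ∀ (w : ℕ), w ∈ colsNext t →
        (∃ j, ∃ hj : j < (b :: t).length, ((b :: t).get ⟨j, hj⟩) ≠ [] ∧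
          ((b :: t).get ⟨j, hj⟩).foldr max 0 = w ∧
          ∀ j', ∀ hj' : j' < (b :: t).length, j < j' →
            ∀ y ∈ (b :: t).get ⟨j', hj'⟩, y < w) := by
      intro w hw
      obtain ⟨j, hj, h1, h2, h3⟩ := ih hw
      refine ⟨j + 1, by simpa using Nat.succ_lt_succ hj, by simpa using h1,
        by simpa using h2, ?_⟩
      intro j' hj' hlt y hy
      cases j' with
      | zero => omega
      | succ k =>
        have hk : k < t.length := by simpa using hj'
        exact h3 k hk (by omega) y (by simpa using hy)
    split_ifs at hv with hcond
    · rcases List.mem_cons.1 hv with heq | hv2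
      · refine ⟨0, by simp, hcond.1, heq.symm, ?_⟩
        intro j' hj' hlt y hy
        cases j' with
        | zero => omega
        | succ k =>
          have hk : k < t.length := by simpa using hj'
          have hyj : y ∈ t.flatten := List.mem_flatten.2 ⟨t.get ⟨k, hk⟩, List.get_mem t _, by
            simpa using hy⟩
          rw [heq]
          exact hcond.2 y hyj
      · exact hshift v hv2
    · exact hshift v hv

lemma blocks_disjoint {bs : List (List ℕ)} (hnd : bs.flatten.Nodup) :
    ∀ j j' (hj : j < bs.length) (hj' : j' < bs.length), j ≠ j' →
      ∀ x, x ∈ bs.get ⟨j, hj⟩ → x ∈ bs.get ⟨j', hj'⟩ → False := by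
  induction bs with
  | nil => simp
  | cons b t ih =>
    have hnd' : (b ++ t.flatten).Nodup := by simpa using hnd
    have hndt : t.flatten.Nodup := (List.nodup_append'.1 hnd').2.1
    have hdisj := (List.nodup_append'.1 hnd').2.2
    intro j j' hj hj' hne x hx hx'
    cases j with
    | zero =>
      cases j' with
      | zero => omega
      | succ k =>
        have hk : k < t.length := by simpa using hj'
        have : x ∈ t.flatten := List.mem_flatten.2 ⟨t.get ⟨k, hk⟩, List.get_mem t _, by
          simpa using hx'⟩
        exact hdisj (by simpa using hx) this
    | succ k =>
      cases j' with
      | zero =>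
        have hk : k < t.length := by simpa using hj
        have : x ∈ t.flatten := List.mem_flatten.2 ⟨t.get ⟨k, hk⟩, List.get_mem t _, by
          simpa using hx⟩
        exact hdisj (by simpa using hx') this
      | succ k' =>
        exact ih hndt k k' (by simpa using hj) (by simpa using hj') (by omega) x
          (by simpa using hx) (by simpa using hx')

lemma indexOf_eq_of_get : ∀ (l : List ℕ) (v : ℕ) (j : ℕ) (hj : j < l.length),
    (∀ j' (hj' : j' < j), l.get ⟨j', by omega⟩ ≠ v) → l.get ⟨j, hj⟩ = v →
    l.idxOf v = j := by
  intro l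
  induction l with
  | nil => simp
  | cons a t ih =>
    intro v j hj hne hget
    cases j with
    | zero =>
      simp only [List.get] at hget
      rw [hget] at *
      exact List.idxOf_cons_self
    | succ k =>
      have ha : a ≠ v := hne 0 (by omega)
      rw [List.idxOf_cons_ne t ha]
      congr 1
      exact ih v k (by simpa using hj)
        (fun j' hj' => hne (j' + 1) (by omega)) (by simpa using hget)

lemma indexOf_lt_iff_gt {l : List ℕ} (hs : l.Pairwise (· > ·)) {u v : ℕ}
    (hu : u ∈ l) (hv : v ∈ l) : l.idxOf u < l.idxOf v ↔ v < u := by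
  have hpg := List.pairwise_iff_get.1 hs
  have hgu : l.get ⟨l.idxOf u, List.idxOf_lt_length_iff.2 hu⟩ = u := List.idxOf_get _
  have hgv : l.get ⟨l.idxOf v, List.idxOf_lt_length_iff.2 hv⟩ = v := List.idxOf_get _
  constructor
  · intro h
    have := hpg ⟨l.idxOf u, List.idxOf_lt_length_iff.2 hu⟩
      ⟨l.idxOf v, List.idxOf_lt_length_iff.2 hv⟩ h
    rw [hgu, hgv] at this
    exact this
  · intro h
    rcases lt_trichotomy (l.idxOf u) (l.idxOf v) with h1 | h1 | h1
    · exact h1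
    · exfalso
      have : u = v := by
        rw [← hgu, ← hgv]
        congr 1
        exact Fin.ext h1
      omega
    · exfalso
      have := hpg ⟨l.idxOf v, List.idxOf_lt_length_iff.2 hv⟩
        ⟨l.idxOf u, List.idxOf_lt_length_iff.2 hu⟩ h1
      rw [hgu, hgv] at this
      omega

lemma get_map_maxL (bs : List (List ℕ)) (j : ℕ) (hj : j < bs.length)
    (hj2 : j < (bs.map (fun b => b.foldr max 0)).length) :
    (bs.map (fun b => b.foldr max 0)).get ⟨j, hj2⟩ = (bs.get ⟨j, hj⟩).foldr max 0 := by
  simp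

section Left
variable {n : ℕ} {π : List ℕ}
variable (hπ : π.Perm (List.range (n + 1))) (h0 : π.getLast? = some 0)
include hπ h0

lemma colSeq_succ (i : ℕ) (hi : 1 ≤ i) :
    colSeqAt π (i + 1) = colsNext (blocksAt π i) := by
  have hndj : (blocksAt π i).flatten.Nodup :=
    List.Nodup.sublist (join_blocksOf_sublist (prefixAt π i)) (prefix_nodup hπ h0 i hi)
  rw [colSeqAt, prefix_succ hπ h0 i hi, rtlMax_join_map_ss hndj]

lemma leftof_spec (i : ℕ) (hi : 1 ≤ i) {v : ℕ} (hv : v ∈ colSeqAt π (i + 1)) :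
    ∃ j, ∃ hjb : j < (blocksAt π i).length, ∃ hjc : j < (colSeqAt π i).length,
      ((blocksAt π i).get ⟨j, hjb⟩) ≠ [] ∧
      ((blocksAt π i).get ⟨j, hjb⟩).foldr max 0 = v ∧
      leftOf π v = (colSeqAt π i).get ⟨j, hjc⟩ ∧
      leftOf π v ∈ colSeqAt π i ∧
      (colSeqAt π i).idxOf (leftOf π v) = j ∧
      (∀ j', ∀ hj' : j' < (blocksAt π i).length, j < j' →
        ∀ y ∈ (blocksAt π i).get ⟨j', hj'⟩, y < v) := by
  have hndP := prefix_nodup hπ h0 i hi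
  have hndj : (blocksAt π i).flatten.Nodup :=
    List.Nodup.sublist (join_blocksOf_sublist (prefixAt π i)) hndP
  have hv' : v ∈ colsNext (blocksAt π i) := (colSeq_succ hπ h0 i hi) ▸ hv
  obtain ⟨j, hjb, hne, hmax, hdom⟩ := colsNext_spec hv'
  have hlen : (blocksAt π i).length = (colSeqAt π i).length := blocksOf_length
  have hjc : j < (colSeqAt π i).length := hlen ▸ hjb
  have hvpos : 0 < v := by
    have hvmem : v ∈ (blocksAt π i).get ⟨j, hjb⟩ := hmax ▸ maxL_mem hne
    have hvj : v ∈ (blocksAt π i).flatten :=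
      List.mem_flatten.2 ⟨_, List.get_mem _ _, hvmem⟩
    exact prefix_pos hπ h0 i hi v (join_blocksOf_subset v hvj)
  have hidx : ((blocksAt π i).map (fun b => b.foldr max 0)).idxOf v = j := by
    apply indexOf_eq_of_get _ _ _ (by simpa using hjb)
    · intro j' hj'
      have hj'b : j' < (blocksAt π i).length := by omega
      rw [get_map_maxL _ _ hj'b]
      intro hEq
      by_cases hbe : (blocksAt π i).get ⟨j', hj'b⟩ = []
      · rw [hbe] at hEq
        simp at hEq
        omega
      · have hvj' : v ∈ (blocksAt π i).get ⟨j', hj'b⟩ := hEq ▸ maxL_mem hbe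
        have hvj : v ∈ (blocksAt π i).get ⟨j, hjb⟩ := hmax ▸ maxL_mem hne
        exact blocks_disjoint hndj j j' hjb hj'b (by omega) v hvj hvj'
    · rw [get_map_maxL _ _ hjb]
      exact hmax
  have hcol : colOf π v = i + 1 := colOf_eq hπ h0 (by omega) hv
  have hleft : leftOf π v = (colSeqAt π i).get ⟨j, hjc⟩ := by
    rw [leftOf, hcol]
    simp only [Nat.add_sub_cancel]
    rw [show (blocksAt π i).map (fun b => b.foldr max 0) =
      ((blocksAt π i).map (fun b => b.foldr max 0)) from rfl] at hidx
    rw [hidx]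
    exact getD_eq_get' _ 0 hjc
  have hmem : leftOf π v ∈ colSeqAt π i := by
    rw [hleft]
    exact List.get_mem _ _
  have hidx2 : (colSeqAt π i).idxOf (leftOf π v) = j := by
    apply indexOf_eq_of_get _ _ _ hjc
    · intro j' hj'
      intro hEq
      have h2 : (colSeqAt π i).get ⟨j', by omega⟩ = (colSeqAt π i).get ⟨j, hjc⟩ := by
        rw [hEq, hleft]
      have h3 := (List.Nodup.get_inj_iff
        (show (colSeqAt π i).Nodup from rtlMax_nodup)).1 h2
      simp at h3
      omega
    · exact hleft.symm
  exact ⟨j, hjb, hjc, hne, hmax, hleft, hmem, hidx2, hdom⟩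

end Left

lemma down_closed_mem {S : Finset ℕ} (h2 : ∀ c ∈ S, 2 ≤ c → c - 1 ∈ S)
    {i : ℕ} (hi : 1 ≤ i) (hcard : i ≤ S.card) (h1 : ∀ c ∈ S, 1 ≤ c) : i ∈ S := by
  have hdesc : ∀ c, c ∈ S → ∀ k, 1 ≤ k → k ≤ c → k ∈ S := by
    intro c
    induction c using Nat.strong_induction_on with
    | _ c ih =>
    intro hc k hk1 hkc
    rcases eq_or_lt_of_le hkc with heq | hlt
    · rw [heq]; exact hc
    · exact ih (c - 1) (by omega) (h2 c hc (by omega)) k hk1 (by omega)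
  by_contra hni
  have hsub : S ⊆ Finset.Icc 1 (i - 1) := by
    intro c hc
    have hc1 := h1 c hc
    have : c < i := by
      by_contra hge
      exact hni (hdesc c hc i hi (by omega))
    exact Finset.mem_Icc.2 ⟨hc1, by omega⟩
  have := Finset.card_le_card hsub
  rw [Nat.card_Icc] at this
  omega

section Rows
variable {n : ℕ} {π : List ℕ}
variable (hπ : π.Perm (List.range (n + 1))) (h0 : π.getLast? = some 0)
include hπ h0

lemma pi_length : π.length = n + 1 := by
  rw [hπ.length_eq, List.length_range]

lemma iter_perm (k : ℕ) : (ss^[k] π).Perm π := by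
  induction k with
  | zero => simp
  | succ m ih =>
    rw [Function.iterate_succ_apply']
    exact (ss_perm _).trans ih

lemma col_mem_range {i v : ℕ} (hi : 1 ≤ i) (hv : v ∈ colSeqAt π i) :
    1 ≤ v ∧ v ≤ n := by
  have hvp : v ∈ prefixAt π i := rtlMax_subset v hv
  have h1 := prefix_pos hπ h0 i hi v hvp
  have hvσ : v ∈ ss^[i-1] π := (List.takeWhile_sublist _).subset hvp
  have hvπ : v ∈ π := (iter_perm hπ h0 (i-1)).subset hvσ
  have := List.mem_range.1 (hπ.subset hvπ)
  omega

lemma mem_col_colOf {v : ℕ} (hv1 : 1 ≤ v) (hvn : v ≤ n) :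
    1 ≤ colOf π v ∧ v ∈ colSeqAt π (colOf π v) := by
  obtain ⟨j, hj1, hj2⟩ := col_exists hπ h0 hv1 hvn
  rw [colOf_eq hπ h0 hj1 hj2]
  exact ⟨hj1, hj2⟩

lemma colpos_eq {i v : ℕ} (hi : 1 ≤ i) (hv : v ∈ colSeqAt π i) :
    colposOf π v = (colSeqAt π i).idxOf v + 1 := by
  rw [colposOf, colOf_eq hπ h0 hi hv]

lemma row_succ (i : ℕ) (hi : 1 ≤ i) {v : ℕ} (hv : v ∈ colSeqAt π (i + 1)) :
    rowOf π v = rowOf π (leftOf π v) := by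
  obtain ⟨j, hjb, hjc, hne, hmax, hleft, hmem, hidx, hdom⟩ := leftof_spec hπ h0 i hi hv
  rw [rowOf, rowOf, colOf_eq hπ h0 (by omega) hv, colOf_eq hπ h0 hi hmem]
  rw [show i + 1 - 1 = (i - 1) + 1 by omega, Function.iterate_succ_apply]

lemma row_one {v : ℕ} (hv : v ∈ colSeqAt π 1) :
    rowOf π v = (colSeqAt π 1).idxOf v + 1 := by
  rw [rowOf, colOf_eq hπ h0 le_rfl hv]
  simpa using colpos_eq hπ h0 le_rfl hv

lemma row_mono : ∀ i, 1 ≤ i → ∀ u v : ℕ, u ∈ colSeqAt π i → v ∈ colSeqAt π i →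
    (colSeqAt π i).idxOf u < (colSeqAt π i).idxOf v → rowOf π u < rowOf π v := by
  intro i
  induction i with
  | zero => omega
  | succ m ih =>
    intro hm u v hu hv hlt
    rcases Nat.eq_or_lt_of_le hm with h1 | h1
    · -- m + 1 = 1, i.e. m = 0
      have hm0 : m = 0 := by omega
      subst hm0
      simp only [Nat.zero_add] at hu hv hlt
      rw [row_one hπ h0 hu, row_one hπ h0 hv]
      omega
    · have hm1 : 1 ≤ m := by omega
      have hvu : v < u := (indexOf_lt_iff_gt rtlMax_sorted hu hv).1 hlt
      obtain ⟨ju, hjub, hjuc, hneu, hmaxu, hleftu, hmemu, hidxu, hdomu⟩ :=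
        leftof_spec hπ h0 m hm1 hu
      obtain ⟨jv, hjvb, hjvc, hnev, hmaxv, hleftv, hmemv, hidxv, hdomv⟩ :=
        leftof_spec hπ h0 m hm1 hv
      have hjuv : ju < jv := by
        rcases lt_trichotomy ju jv with h2 | h2 | h2
        · exact h2
        · exfalso
          subst h2
          have : u = v := hmaxu.symm.trans hmaxv
          omega
        · exfalso
          have humem : u ∈ (blocksAt π m).get ⟨ju, hjub⟩ := hmaxu ▸ maxL_mem hneu
          have := hdomv ju hjub h2 u humem
          omega
      rw [row_succ hπ h0 m hm1 hu, row_succ hπ h0 m hm1 hv]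
      apply ih hm1 _ _ hmemu hmemv
      rw [hidxu, hidxv]
      exact hjuv

lemma chain_elt : ∀ i, 1 ≤ i → ∀ v ∈ colSeqAt π i, ∀ i', 1 ≤ i' → i' ≤ i →
    ∃ w, w ∈ colSeqAt π i' ∧ rowOf π w = rowOf π v := by
  intro i
  induction i with
  | zero => omega
  | succ m ih =>
    intro hm v hv i' hi'1 hi'2
    rcases Nat.eq_or_lt_of_le hi'2 with h1 | h1
    · exact ⟨v, h1 ▸ hv, rfl⟩
    · have hm1 : 1 ≤ m := by omega
      obtain ⟨j, hjb, hjc, hne, hmax, hleft, hmem, hidx, hdom⟩ :=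
        leftof_spec hπ h0 m hm1 hv
      obtain ⟨w, hw1, hw2⟩ := ih hm1 (leftOf π v) hmem i' hi'1 (by omega)
      exact ⟨w, hw1, by rw [hw2, ← row_succ hπ h0 m hm1 hv]⟩

lemma row_bounds {i v : ℕ} (hi : 1 ≤ i) (hv : v ∈ colSeqAt π i) :
    1 ≤ rowOf π v ∧ rowOf π v ≤ (colSeqAt π 1).length := by
  obtain ⟨w, hw1, hw2⟩ := chain_elt hπ h0 i hi v hv 1 le_rfl hi
  rw [← hw2, row_one hπ h0 hw1]
  have := List.idxOf_lt_length_iff.2 hw1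
  omega

lemma fiber_inj {u v : ℕ} (hu1 : 1 ≤ u) (hun : u ≤ n) (hv1 : 1 ≤ v) (hvn : v ≤ n)
    (hcol : colOf π u = colOf π v) (hrow : rowOf π u = rowOf π v) : u = v := by
  obtain ⟨hcu, hmu⟩ := mem_col_colOf hπ h0 hu1 hun
  obtain ⟨hcv, hmv⟩ := mem_col_colOf hπ h0 hv1 hvn
  rw [hcol] at hmu
  by_contra hne
  rcases lt_trichotomy ((colSeqAt π (colOf π v)).idxOf u)
    ((colSeqAt π (colOf π v)).idxOf v) with h1 | h1 | h1
  · have := row_mono hπ h0 (colOf π v) hcv u v hmu hmv h1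
    omega
  · apply hne
    have hgu : (colSeqAt π (colOf π v)).get
        ⟨_, List.idxOf_lt_length_iff.2 hmu⟩ = u := List.idxOf_get _
    have hgv : (colSeqAt π (colOf π v)).get
        ⟨_, List.idxOf_lt_length_iff.2 hmv⟩ = v := List.idxOf_get _
    have heq : (colSeqAt π (colOf π v)).get ⟨_, List.idxOf_lt_length_iff.2 hmu⟩ =
        (colSeqAt π (colOf π v)).get ⟨_, List.idxOf_lt_length_iff.2 hmv⟩ :=
      congrArg (colSeqAt π (colOf π v)).get (Fin.ext h1)
    exact (hgu.symm.trans heq).trans hgv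
  · have := row_mono hπ h0 (colOf π v) hcv v u hmv hmu h1
    omega

lemma fibercard_ge {i v : ℕ} (hi : 1 ≤ i) (hv : v ∈ colSeqAt π i) :
    i ≤ ((Finset.Icc 1 n).filter (fun w => rowOf π w = rowOf π v)).card := by
  classical
  choose f hf1 hf2 using chain_elt hπ h0 i hi v hv
  set g : ℕ → ℕ := fun i' => if h : 1 ≤ i' ∧ i' ≤ i then f i' h.1 h.2 else 0 with hg
  have hkey : (Finset.Icc 1 i).card ≤
      ((Finset.Icc 1 n).filter (fun w => rowOf π w = rowOf π v)).card := by
    apply Finset.card_le_card_of_injOn g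
    · intro i' hi'
      obtain ⟨h1', h2'⟩ := Finset.mem_Icc.1 hi'
      have hgval : g i' = f i' h1' h2' := dif_pos ⟨h1', h2'⟩
      rw [hgval]
      have hb := col_mem_range hπ h0 h1' (hf1 i' h1' h2')
      exact Finset.mem_filter.2 ⟨Finset.mem_Icc.2 hb, hf2 i' h1' h2'⟩
    · intro a ha b hb hfe
      obtain ⟨ha1, ha2⟩ := Finset.mem_Icc.1 ha
      obtain ⟨hb1, hb2⟩ := Finset.mem_Icc.1 hb
      have hga : g a = f a ha1 ha2 := dif_pos ⟨ha1, ha2⟩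
      have hgb : g b = f b hb1 hb2 := dif_pos ⟨hb1, hb2⟩
      have hca : colOf π (f a ha1 ha2) = a := colOf_eq hπ h0 ha1 (hf1 a ha1 ha2)
      have hcb : colOf π (f b hb1 hb2) = b := colOf_eq hπ h0 hb1 (hf1 b hb1 hb2)
      rw [← hca, ← hcb, ← hga, ← hgb, hfe]
  rw [Nat.card_Icc] at hkey
  omega

end Rows

lemma nodup_indexOf_get {l : List ℕ} (h : l.Nodup) {k : ℕ} (hk : k < l.length) :
    l.idxOf (l.get ⟨k, hk⟩) = k := by
  apply indexOf_eq_of_get _ _ _ hk _ rfl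
  intro j' hj' hEq
  have h2 := (List.Nodup.get_inj_iff h).1 hEq
  simp only [Fin.mk.injEq] at h2
  omega

section Alpha
variable {n : ℕ} {π : List ℕ}
variable (hπ : π.Perm (List.range (n + 1))) (h0 : π.getLast? = some 0)
include hπ h0

lemma alpha_length : (alphaOf π).length = (colSeqAt π 1).length := by
  simp [alphaOf]

lemma alpha_getD {j : ℕ} (h1 : 1 ≤ j) (h2 : j ≤ (colSeqAt π 1).length) :
    (alphaOf π).getD (j - 1) 0 =
      ((Finset.Icc 1 n).filter (fun w => rowOf π w = j)).card := by
  have hlen : j - 1 < (alphaOf π).length := by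
    rw [alpha_length hπ h0]
    omega
  rw [getD_eq_get' _ _ hlen]
  have hplen : π.length - 1 = n := by simp [pi_length hπ h0]
  simp only [alphaOf, List.get_eq_getElem, List.getElem_map, List.getElem_range', hplen]
  rw [show 1 + 1 * (j - 1) = j by omega]

lemma occ_exists {i j' : ℕ} (hi : 1 ≤ i)
    (hcard : i ≤ ((Finset.Icc 1 n).filter (fun w => rowOf π w = j')).card) :
    ∃ w, 1 ≤ w ∧ w ≤ n ∧ colOf π w = i ∧ rowOf π w = j' := by
  classical
  set F := (Finset.Icc 1 n).filter (fun w => rowOf π w = j') with hF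
  set S := F.image (colOf π) with hS
  have hinj : Set.InjOn (colOf π) F := by
    intro a ha b hb hab
    obtain ⟨ha', har⟩ := Finset.mem_filter.1 ha
    obtain ⟨hb', hbr⟩ := Finset.mem_filter.1 hb
    obtain ⟨ha1, han⟩ := Finset.mem_Icc.1 ha'
    obtain ⟨hb1, hbn⟩ := Finset.mem_Icc.1 hb'
    exact fiber_inj hπ h0 ha1 han hb1 hbn hab (har.trans hbr.symm)
  have hcardS : S.card = F.card := Finset.card_image_of_injOn hinj
  have h1 : ∀ c ∈ S, 1 ≤ c := by
    intro c hc
    obtain ⟨w, hw, rfl⟩ := Finset.mem_image.1 hc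
    obtain ⟨hw', _⟩ := Finset.mem_filter.1 hw
    obtain ⟨hw1, hwn⟩ := Finset.mem_Icc.1 hw'
    exact (mem_col_colOf hπ h0 hw1 hwn).1
  have h2 : ∀ c ∈ S, 2 ≤ c → c - 1 ∈ S := by
    intro c hc hc2
    obtain ⟨w, hw, hwc⟩ := Finset.mem_image.1 hc
    obtain ⟨hw', hwr⟩ := Finset.mem_filter.1 hw
    obtain ⟨hw1, hwn⟩ := Finset.mem_Icc.1 hw'
    have hwm : w ∈ colSeqAt π c := by
      have := (mem_col_colOf hπ h0 hw1 hwn).2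
      rwa [hwc] at this
    have hwm' : w ∈ colSeqAt π ((c - 1) + 1) := by
      rwa [show (c - 1) + 1 = c by omega]
    obtain ⟨j, hjb, hjc, hne, hmax, hleft, hmem, hidx, hdom⟩ :=
      leftof_spec hπ h0 (c - 1) (by omega) hwm'
    have hlb := col_mem_range hπ h0 (show 1 ≤ c - 1 by omega) hmem
    have hlc : colOf π (leftOf π w) = c - 1 := colOf_eq hπ h0 (by omega) hmem
    have hlr : rowOf π (leftOf π w) = j' := by
      rw [← row_succ hπ h0 (c - 1) (by omega) hwm', hwr]
    refine Finset.mem_image.2 ⟨leftOf π w, ?_, hlc⟩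
    exact Finset.mem_filter.2 ⟨Finset.mem_Icc.2 hlb, hlr⟩
  have hiS : i ∈ S := down_closed_mem h2 hi (by omega) h1
  obtain ⟨w, hw, hwc⟩ := Finset.mem_image.1 hiS
  obtain ⟨hw', hwr⟩ := Finset.mem_filter.1 hw
  obtain ⟨hw1, hwn⟩ := Finset.mem_Icc.1 hw'
  exact ⟨w, hw1, hwn, hwc, hwr⟩

lemma filter_diagram_eq {i v : ℕ} (hi : 1 ≤ i) (hv : v ∈ colSeqAt π i) :
    (Finset.range (rowOf π v)).filter (fun j' => inDiagram (alphaOf π) (i, j'))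
      = (Finset.range ((colSeqAt π i).idxOf v)).image
          (fun k => rowOf π ((colSeqAt π i).getD k 0)) := by
  classical
  have hvlt : (colSeqAt π i).idxOf v < (colSeqAt π i).length :=
    List.idxOf_lt_length_iff.2 hv
  ext j'
  simp only [Finset.mem_filter, Finset.mem_range, Finset.mem_image]
  constructor
  · rintro ⟨hjr, hd⟩
    obtain ⟨hd1, hd2, hd3, hd4⟩ := hd
    have hj'le : j' ≤ (colSeqAt π 1).length := by
      rw [← alpha_length hπ h0]
      exact hd3
    have hcard : i ≤ ((Finset.Icc 1 n).filter (fun w => rowOf π w = j')).card := by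
      rw [← alpha_getD hπ h0 hd2 hj'le]
      exact hd4
    obtain ⟨w, hw1, hwn, hwc, hwr⟩ := occ_exists hπ h0 hi hcard
    have hwm : w ∈ colSeqAt π i := by
      have := (mem_col_colOf hπ h0 hw1 hwn).2
      rwa [hwc] at this
    have hwv : w ≠ v := by
      intro he
      rw [← hwr, he] at hjr
      omega
    have hkm : (colSeqAt π i).idxOf w < (colSeqAt π i).idxOf v := by
      rcases lt_trichotomy ((colSeqAt π i).idxOf w) ((colSeqAt π i).idxOf v)
        with h' | h' | h'
      · exact h'
      · exfalso
        apply hwv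
        have hgu : (colSeqAt π i).get ⟨_, List.idxOf_lt_length_iff.2 hwm⟩ = w :=
          List.idxOf_get _
        have hgv : (colSeqAt π i).get ⟨_, List.idxOf_lt_length_iff.2 hv⟩ = v :=
          List.idxOf_get _
        have heq : (colSeqAt π i).get ⟨_, List.idxOf_lt_length_iff.2 hwm⟩ =
            (colSeqAt π i).get ⟨_, List.idxOf_lt_length_iff.2 hv⟩ :=
          congrArg (colSeqAt π i).get (Fin.ext h')
        exact (hgu.symm.trans heq).trans hgv
      · exfalso
        have := row_mono hπ h0 i hi v w hv hwm h'
        rw [hwr] at this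
        omega
    refine ⟨(colSeqAt π i).idxOf w, hkm, ?_⟩
    rw [getD_eq_get' _ _ (List.idxOf_lt_length_iff.2 hwm), List.idxOf_get]
    exact hwr
  · rintro ⟨k, hk, rfl⟩
    have hkl : k < (colSeqAt π i).length := by omega
    rw [getD_eq_get' _ _ hkl]
    set w := (colSeqAt π i).get ⟨k, hkl⟩ with hw
    have hwm : w ∈ colSeqAt π i := List.get_mem _ _
    have hkidx : (colSeqAt π i).idxOf w = k := nodup_indexOf_get (show (colSeqAt π i).Nodup from rtlMax_nodup) hkl
    have hrowlt : rowOf π w < rowOf π v := by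
      apply row_mono hπ h0 i hi w v hwm hv
      rw [hkidx]
      exact hk
    have hrb := row_bounds hπ h0 hi hwm
    refine ⟨hrowlt, hi, hrb.1, ?_, ?_⟩
    · rw [alpha_length hπ h0]
      exact hrb.2
    · rw [alpha_getD hπ h0 hrb.1 hrb.2]
      exact fibercard_ge hπ h0 hi hwm

lemma rho_strict_mono {i : ℕ} (hi : 1 ≤ i) {k k' : ℕ}
    (hk : k < (colSeqAt π i).length) (hk' : k' < (colSeqAt π i).length) (hlt : k < k') :
    rowOf π ((colSeqAt π i).getD k 0) < rowOf π ((colSeqAt π i).getD k' 0) := by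
  rw [getD_eq_get' _ _ hk, getD_eq_get' _ _ hk']
  apply row_mono hπ h0 i hi _ _ (List.get_mem _ _) (List.get_mem _ _)
  rw [nodup_indexOf_get (show (colSeqAt π i).Nodup from rtlMax_nodup) hk, nodup_indexOf_get (show (colSeqAt π i).Nodup from rtlMax_nodup) hk']
  exact hlt

lemma filter_diagram_card {i v : ℕ} (hi : 1 ≤ i) (hv : v ∈ colSeqAt π i) :
    ((Finset.range (rowOf π v)).filter (fun j' => inDiagram (alphaOf π) (i, j'))).card
      = (colSeqAt π i).idxOf v := by
  classical
  rw [filter_diagram_eq hπ h0 hi hv]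
  have hvlt : (colSeqAt π i).idxOf v < (colSeqAt π i).length :=
    List.idxOf_lt_length_iff.2 hv
  rw [Finset.card_image_of_injOn, Finset.card_range]
  intro a ha b hb hab
  simp only [Finset.coe_range, Set.mem_Iio] at ha hb
  have hab' : rowOf π ((colSeqAt π i).getD a 0) = rowOf π ((colSeqAt π i).getD b 0) := hab
  by_contra hne
  rcases lt_or_gt_of_ne hne with h' | h'
  · have := rho_strict_mono hπ h0 hi (k := a) (k' := b) (by omega) (by omega) h'
    omega
  · have := rho_strict_mono hπ h0 hi (k := b) (k' := a) (by omega) (by omega) h'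
    omega

lemma filter_diagram_sup {i v : ℕ} (hi : 1 ≤ i) (hv : v ∈ colSeqAt π i)
    (hm : 1 ≤ (colSeqAt π i).idxOf v) :
    ((((Finset.range (rowOf π v)).filter (fun j' => inDiagram (alphaOf π) (i, j'))) ∪
        {0}).sup id)
      = rowOf π ((colSeqAt π i).getD ((colSeqAt π i).idxOf v - 1) 0) := by
  classical
  have hvlt : (colSeqAt π i).idxOf v < (colSeqAt π i).length :=
    List.idxOf_lt_length_iff.2 hv
  rw [filter_diagram_eq hπ h0 hi hv]
  apply le_antisymm
  · apply Finset.sup_le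
    intro x hx
    rcases Finset.mem_union.1 hx with hx | hx
    · obtain ⟨k, hk, rfl⟩ := Finset.mem_image.1 hx
      rw [Finset.mem_range] at hk
      simp only [id]
      rcases eq_or_lt_of_le (show k ≤ (colSeqAt π i).idxOf v - 1 by omega)
        with heq | hlt
      · rw [heq]
      · exact le_of_lt (rho_strict_mono hπ h0 hi (by omega) (by omega) hlt)
    · rw [Finset.mem_singleton] at hx
      rw [hx]
      simp
  · apply Finset.le_sup (f := id)
    exact Finset.mem_union.2 (Or.inl (Finset.mem_image.2
      ⟨(colSeqAt π i).idxOf v - 1, Finset.mem_range.2 (by omega), rfl⟩))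

end Alpha

end St14

/-- Lemma 4.2: the permutation-level tableau data agrees with the composition-level
data of `α_π` through `T_π`. -/
theorem stmt_14 (n : ℕ) (π : List ℕ) (hπ : π.Perm (List.range (n + 1)))
    (h0 : π.getLast? = some 0) (v : ℕ) (hv1 : 1 ≤ v) (hvn : v ≤ n) :
    colOf π v = (Tmap π v).1 ∧
    rowOf π v = (Tmap π v).2 ∧
    colposOf π v = colposA (alphaOf π) (Tmap π v) ∧
    (1 < colOf π v → Tmap π (leftOf π v) = leftA (Tmap π v)) ∧
    (1 < colposOf π v → Tmap π (upOf π v) = upA (alphaOf π) (Tmap π v)) := by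
  classical
  obtain ⟨hi1, hvC⟩ := St14.mem_col_colOf hπ h0 hv1 hvn
  refine ⟨rfl, rfl, ?_, ?_, ?_⟩
  · show colposOf π v = colposA (alphaOf π) (colOf π v, rowOf π v)
    have hrfl : colposA (alphaOf π) (colOf π v, rowOf π v) =
        (((Finset.range (rowOf π v)).filter
          (fun j' => inDiagram (alphaOf π) (colOf π v, j'))) ∪ {0}).card := rfl
    rw [St14.colpos_eq hπ h0 hi1 hvC, hrfl]
    have hdisj : Disjoint ((Finset.range (rowOf π v)).filter
        (fun j' => inDiagram (alphaOf π) (colOf π v, j'))) ({0} : Finset ℕ) := by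
      simp only [Finset.disjoint_singleton_right, Finset.mem_filter]
      rintro ⟨-, hd⟩
      have := hd.2.1
      omega
    rw [Finset.card_union_of_disjoint hdisj, Finset.card_singleton,
      St14.filter_diagram_card hπ h0 hi1 hvC]
  · intro hcol
    have hvC' : v ∈ colSeqAt π ((colOf π v - 1) + 1) := by
      rwa [show colOf π v - 1 + 1 = colOf π v by omega]
    obtain ⟨j, hjb, hjc, hne, hmax, hleft, hmem, hidx, hdom⟩ :=
      St14.leftof_spec hπ h0 (colOf π v - 1) (by omega) hvC'
    have hcl : colOf π (leftOf π v) = colOf π v - 1 :=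
      St14.colOf_eq hπ h0 (by omega) hmem
    have hrl : rowOf π (leftOf π v) = rowOf π v :=
      (St14.row_succ hπ h0 _ (by omega) hvC').symm
    show (colOf π (leftOf π v), rowOf π (leftOf π v)) = (colOf π v - 1, rowOf π v)
    rw [hcl, hrl]
  · intro hpos
    have hcp := St14.colpos_eq hπ h0 hi1 hvC
    have hm1 : 1 ≤ (colSeqAt π (colOf π v)).idxOf v := by omega
    have hvlt : (colSeqAt π (colOf π v)).idxOf v < (colSeqAt π (colOf π v)).length :=
      List.idxOf_lt_length_iff.2 hvC
    have hup : upOf π v =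
        (colSeqAt π (colOf π v)).getD ((colSeqAt π (colOf π v)).idxOf v - 1) 0 := by
      rw [upOf, hcp]
      congr 1
    have hul : (colSeqAt π (colOf π v)).getD ((colSeqAt π (colOf π v)).idxOf v - 1) 0 =
        (colSeqAt π (colOf π v)).get ⟨(colSeqAt π (colOf π v)).idxOf v - 1, by omega⟩ :=
      getD_eq_get' _ _ (by omega)
    have humem : upOf π v ∈ colSeqAt π (colOf π v) := by
      rw [hup, hul]
      exact List.get_mem _ _
    have hcu : colOf π (upOf π v) = colOf π v := St14.colOf_eq hπ h0 hi1 humem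
    have hsup := St14.filter_diagram_sup hπ h0 hi1 hvC hm1
    have hrfl : upA (alphaOf π) (colOf π v, rowOf π v) = (colOf π v,
        ((((Finset.range (rowOf π v)).filter
          (fun j' => inDiagram (alphaOf π) (colOf π v, j'))) ∪ {0}).sup id)) := rfl
    show (colOf π (upOf π v), rowOf π (upOf π v)) = upA (alphaOf π) (colOf π v, rowOf π v)
    rw [hcu, hrfl, hsup, ← hup]
end

section
/- For all t ∈ ℕ and all π ∈ S_n', the permutation π is t-stack-sortable (i.e. met(π) ≤ t) if and only if w(α_π) ≤ t, where w(α) denotes the largest part of the composition α; equivalently, met(π) = w(α_π). -/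
namespace StackAux

theorem le_foldrMax {l : List ℕ} {y : ℕ} (hy : y ∈ l) : y ≤ l.foldr max 0 := by
  induction l with
  | nil => simp at hy
  | cons x xs ih =>
    rcases List.mem_cons.mp hy with h | h
    · subst h; exact le_max_left _ _
    · exact le_trans (ih h) (le_max_right _ _)

theorem foldrMax_le {l : List ℕ} {m : ℕ} (h : ∀ y ∈ l, y ≤ m) : l.foldr max 0 ≤ m := by
  induction l with
  | nil => simp
  | cons x xs ih =>
    simp only [List.foldr_cons, max_le_iff]
    exact ⟨h x (List.mem_cons_self), ih fun y hy => h y (List.mem_cons_of_mem _ hy)⟩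

theorem ss_cons (x : ℕ) (xs : List ℕ) :
    ss (x :: xs) =
      ss ((x :: xs).takeWhile (fun y => y ≠ (x :: xs).foldr max 0)) ++
      ss (((x :: xs).dropWhile (fun y => y ≠ (x :: xs).foldr max 0)).drop 1) ++
      [(x :: xs).foldr max 0] := by
  rw [ss]

theorem ss_eq (l : List ℕ) (hl : l ≠ []) :
    ss l = ss (l.takeWhile (fun y => y ≠ l.foldr max 0)) ++
      ss ((l.dropWhile (fun y => y ≠ l.foldr max 0)).drop 1) ++ [l.foldr max 0] := by
  cases l with
  | nil => exact absurd rfl hl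
  | cons x xs => exact ss_cons x xs

/-- If `l = A ++ m :: B` with `m ∉ A` and `m` the max, then `ss l = ss A ++ ss B ++ [m]`. -/
theorem ss_split {A B : List ℕ} {m : ℕ} (hA : m ∉ A)
    (hmax : ∀ y ∈ A ++ m :: B, y ≤ m) :
    ss (A ++ m :: B) = ss A ++ ss B ++ [m] := by
  have hmem : m ∈ A ++ m :: B := by simp
  have hfold : (A ++ m :: B).foldr max 0 = m :=
    le_antisymm (foldrMax_le hmax) (le_foldrMax hmem)
  have htw : (A ++ m :: B).takeWhile (fun y => y ≠ m) = A := by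
    rw [List.takeWhile_append_of_pos ?_]
    · simp
    · intro y hy; simp only [ne_eq, decide_eq_true_eq]; rintro rfl; exact hA hy
  have hdw : (A ++ m :: B).dropWhile (fun y => y ≠ m) = m :: B := by
    have := List.takeWhile_append_dropWhile (p := fun y => (y ≠ m : Bool)) (l := A ++ m :: B)
    rw [htw] at this
    exact List.append_cancel_left (by rw [this])
  rw [ss_eq _ (by simp), hfold, htw, hdw, List.drop_one, List.tail_cons]

theorem head_eq_of_cons {α : Type*} {l : List α} {a : α} {t : List α} (h : l = a :: t)
    (hne : l ≠ []) : l.head hne = a := by subst h; rfl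

theorem ss_perm_aux : ∀ (n : ℕ) (l : List ℕ), l.length ≤ n → (ss l).Perm l := by
  intro n
  induction n with
  | zero => intro l hl; rw [List.length_eq_zero_iff.mp (Nat.le_zero.mp hl)]; rw [ss]
  | succ n ih =>
  intro l hlen
  cases l with
  | nil => rw [ss]
  | cons x xs =>
    set l := x :: xs with hl
    set m := l.foldr max 0 with hm
    have hmem : m ∈ l := foldrMaxMem x xs
    obtain ⟨t, ht⟩ : ∃ t, l.dropWhile (fun y => y ≠ m) = m :: t := by
      have hd : l.dropWhile (fun y => y ≠ m) ≠ [] := by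
        intro h; rw [List.dropWhile_eq_nil_iff] at h; simpa using h m hmem
      cases hdw : l.dropWhile (fun y => y ≠ m) with
      | nil => exact absurd hdw hd
      | cons a t =>
        refine ⟨t, ?_⟩
        have ha : (l.dropWhile (fun y => y ≠ m)).head hd = a := head_eq_of_cons hdw hd
        have := List.head_dropWhile_not (fun y => (y ≠ m : Bool)) hd
        rw [ha] at this
        simp only [ne_eq, decide_not, Bool.not_eq_false', decide_eq_true_eq] at this
        rw [this]
    have hsplit : l.takeWhile (fun y => y ≠ m) ++ m :: t = l := by
      conv_rhs => rw [← List.takeWhile_append_dropWhile (p := fun y => (y ≠ m : Bool)) (l := l)]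
      rw [ht]
    have h1 : (l.takeWhile (fun y => y ≠ m)).length < l.length := takeWhileLt l m hmem
    have h2 : ((l.dropWhile (fun y => y ≠ m)).drop 1).length < l.length :=
      dropWhileDropLt l m (by simp [hl])
    have p1 := ih (l.takeWhile (fun y => y ≠ m)) (by omega)
    have p2 := ih ((l.dropWhile (fun y => y ≠ m)).drop 1) (by omega)
    rw [ht, List.drop_one, List.tail_cons] at p2
    rw [ss_eq l (by simp [hl]), ← hm, ht, List.drop_one, List.tail_cons]
    refine ((p1.append p2).append (List.Perm.refl [m])).trans ?_
    conv_rhs => rw [← hsplit]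
    rw [List.append_assoc]
    exact List.Perm.append_left _ (List.perm_append_singleton m t)

theorem ss_perm (l : List ℕ) : (ss l).Perm l := ss_perm_aux l.length l le_rfl

theorem ss_length (l : List ℕ) : (ss l).length = l.length := (ss_perm l).length_eq

end StackAux

namespace StackAux

theorem rtlMax_nil : rtlMax [] = [] := by rw [rtlMax]

theorem rtlMax_cons (x : ℕ) (xs : List ℕ) :
    rtlMax (x :: xs) = if ∀ y ∈ xs, y < x then x :: rtlMax xs else rtlMax xs := by
  rw [rtlMax]

theorem blocksOf_nil : blocksOf [] = [] := by rw [blocksOf]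

theorem blocksOf_cons (x : ℕ) (xs : List ℕ) :
    blocksOf (x :: xs) = if ∀ y ∈ xs, y < x then [] :: blocksOf xs
    else match blocksOf xs with
      | [] => [[x]]
      | b :: bs => (x :: b) :: bs := by
  rw [blocksOf]

theorem blocksOf_ne_nil (x : ℕ) (xs : List ℕ) : blocksOf (x :: xs) ≠ [] := by
  rw [blocksOf_cons]
  split
  · simp
  · split <;> simp

theorem blocksOf_eq_nil_iff (l : List ℕ) : blocksOf l = [] ↔ l = [] := by
  cases l with
  | nil => simp [blocksOf_nil]
  | cons x xs => simp [blocksOf_ne_nil]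

theorem length_blocksOf (l : List ℕ) : (blocksOf l).length = (rtlMax l).length := by
  induction l with
  | nil => simp [rtlMax_nil, blocksOf_nil]
  | cons x xs ih =>
    rw [rtlMax_cons, blocksOf_cons]
    by_cases hcond : ∀ y ∈ xs, y < x
    · simp [if_pos hcond, ih]
    · rw [if_neg hcond, if_neg hcond]
      cases hb : blocksOf xs with
      | nil =>
        rw [blocksOf_eq_nil_iff] at hb
        subst hb
        simp at hcond
      | cons b bs =>
        rw [hb] at ih
        simpa using ih

theorem rtlMax_subset (l : List ℕ) : ∀ v ∈ rtlMax l, v ∈ l := by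
  induction l with
  | nil => simp [rtlMax_nil]
  | cons x xs ih =>
    rw [rtlMax_cons]
    split
    · intro v hv
      rcases List.mem_cons.mp hv with h | h
      · simp [h]
      · exact List.mem_cons_of_mem _ (ih v h)
    · intro v hv; exact List.mem_cons_of_mem _ (ih v hv)

/-- the join of the blocks together with the rtl maxima is a permutation of `l` -/
theorem blocks_perm (l : List ℕ) : ((blocksOf l).flatten ++ rtlMax l).Perm l := by
  induction l with
  | nil => simp [rtlMax_nil, blocksOf_nil]
  | cons x xs ih =>
    rw [rtlMax_cons, blocksOf_cons]
    by_cases hcond : ∀ y ∈ xs, y < x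
    · rw [if_pos hcond, if_pos hcond]
      simpa using ((List.perm_middle).trans (List.Perm.cons x ih))
    · rw [if_neg hcond, if_neg hcond]
      cases hb : blocksOf xs with
      | nil =>
        rw [blocksOf_eq_nil_iff] at hb; subst hb; simp at hcond
      | cons b bs =>
        rw [hb] at ih
        simpa [List.append_assoc] using ih.cons x

theorem rtlMax_nonempty (l : List ℕ) (hl : l ≠ []) : rtlMax l ≠ [] := by
  induction l with
  | nil => exact absurd rfl hl
  | cons x xs ih =>
    rw [rtlMax_cons]
    split
    · simp
    · rename_i hcond
      cases xs with
      | nil => simp at hcond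
      | cons a as => exact ih (by simp)

/-- decomposition at the maximum: `rtlMax (b ++ m :: q) = m :: rtlMax q` -/
theorem rtlMax_append (b q : List ℕ) (m : ℕ) (hb : ∀ y ∈ b, y < m) (hq : ∀ y ∈ q, y < m) :
    rtlMax (b ++ m :: q) = m :: rtlMax q := by
  induction b with
  | nil =>
    rw [List.nil_append, rtlMax_cons, if_pos hq]
  | cons x bs ih =>
    rw [List.cons_append, rtlMax_cons, if_neg, ih (fun y hy => hb y (List.mem_cons_of_mem _ hy))]
    intro hall
    exact absurd (hall m (by simp)) (not_lt.mpr (le_of_lt (hb x (by simp))))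

theorem blocksOf_append (b q : List ℕ) (m : ℕ) (hb : ∀ y ∈ b, y < m) (hq : ∀ y ∈ q, y < m) :
    blocksOf (b ++ m :: q) = b :: blocksOf q := by
  induction b with
  | nil =>
    rw [List.nil_append, blocksOf_cons, if_pos hq]
  | cons x bs ih =>
    have hne : ¬∀ y ∈ bs ++ m :: q, y < x := by
      intro hall
      exact absurd (hall m (by simp)) (not_lt.mpr (le_of_lt (hb x (by simp))))
    rw [List.cons_append, blocksOf_cons, if_neg hne,
      ih (fun y hy => hb y (List.mem_cons_of_mem _ hy))]

/-- rtl maxima are strictly decreasing -/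
theorem rtlMax_sorted (l : List ℕ) : (rtlMax l).Pairwise (· > ·) := by
  induction l with
  | nil => simp [rtlMax_nil]
  | cons x xs ih =>
    rw [rtlMax_cons]
    split
    · rename_i hcond
      exact List.Pairwise.cons (fun y hy => hcond y (rtlMax_subset xs y hy)) ih
    · exact ih

/-- membership in rtlMax: `v ∈ rtlMax l` iff `l` splits with all later entries smaller. -/
theorem mem_rtlMax_iff {l : List ℕ} {v : ℕ} :
    v ∈ rtlMax l ↔ ∃ t₁ t₂, l = t₁ ++ v :: t₂ ∧ ∀ y ∈ t₂, y < v := by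
  induction l with
  | nil => simp [rtlMax_nil]
  | cons x xs ih =>
    rw [rtlMax_cons]
    constructor
    · intro hv
      by_cases hcond : ∀ y ∈ xs, y < x
      · rw [if_pos hcond] at hv
        rcases List.mem_cons.mp hv with h | h
        · exact ⟨[], xs, by rw [h]; rfl, by subst h; exact hcond⟩
        · obtain ⟨t₁, t₂, h1, h2⟩ := ih.mp h
          exact ⟨x :: t₁, t₂, by rw [h1]; rfl, h2⟩
      · rw [if_neg hcond] at hv
        obtain ⟨t₁, t₂, h1, h2⟩ := ih.mp hv
        exact ⟨x :: t₁, t₂, by rw [h1]; rfl, h2⟩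
    · rintro ⟨t₁, t₂, h1, h2⟩
      cases t₁ with
      | nil =>
        simp only [List.nil_append, List.cons.injEq] at h1
        obtain ⟨rfl, rfl⟩ := h1
        rw [if_pos h2]
        exact List.mem_cons_self
      | cons a t₁' =>
        simp only [List.cons_append, List.cons.injEq] at h1
        obtain ⟨rfl, h1⟩ := h1
        have hmem : v ∈ rtlMax xs := ih.mpr ⟨t₁', t₂, h1, h2⟩
        split
        · exact List.mem_cons_of_mem _ hmem
        · exact hmem

end StackAux

namespace StackAux

set_option linter.deprecated false

/-- Core lemma: one stack-sorting step on a list of the form `Q ++ 0 :: T`. -/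
theorem exists_max_decomp (Q : List ℕ) (hQ : Q ≠ []) :
    ∃ b Q', Q = b ++ Q.foldr max 0 :: Q' ∧ Q.foldr max 0 ∉ b := by
  set m := Q.foldr max 0 with hm
  have hmem : m ∈ Q := by
    cases Q with
    | nil => exact absurd rfl hQ
    | cons x xs => exact foldrMaxMem x xs
  have hd : Q.dropWhile (fun y => y ≠ m) ≠ [] := by
    intro h; rw [List.dropWhile_eq_nil_iff] at h; simpa using h m hmem
  obtain ⟨t, ht⟩ : ∃ t, Q.dropWhile (fun y => y ≠ m) = m :: t := by
    cases hdw : Q.dropWhile (fun y => y ≠ m) with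
    | nil => exact absurd hdw hd
    | cons a t =>
      refine ⟨t, ?_⟩
      have ha : (Q.dropWhile (fun y => y ≠ m)).head hd = a := head_eq_of_cons hdw hd
      have := List.head_dropWhile_not (fun y => (y ≠ m : Bool)) hd
      rw [ha] at this
      simp only [ne_eq, decide_not, Bool.not_eq_false', decide_eq_true_eq] at this
      rw [this]
  refine ⟨Q.takeWhile (fun y => y ≠ m), t, ?_, ?_⟩
  · conv_lhs => rw [← List.takeWhile_append_dropWhile (p := fun y => (y ≠ m : Bool)) (l := Q)]
    rw [ht]
  · intro hmb
    have := List.mem_takeWhile_imp hmb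
    simp at this

theorem ss_step : ∀ (N : ℕ) (Q T : List ℕ), (Q ++ 0 :: T).length ≤ N →
    (Q ++ 0 :: T).Nodup → (0 : ℕ) ∉ Q → (0 : ℕ) ∉ T → T.Pairwise (· < ·) →
    ∃ T' : List ℕ, ss (Q ++ 0 :: T) = ((blocksOf Q).map ss).flatten ++ 0 :: T' ∧
      T'.Pairwise (· < ·) ∧ T'.Perm (rtlMax Q ++ T) := by
  intro N
  induction N with
  | zero => intro Q T hlen; simp at hlen
  | succ N ih =>
  intro Q T hlen hnd hQ0 hT0 hTs
  by_cases hQnil : Q = []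
  · subst hQnil
    -- l = 0 :: T
    cases hT : T with
    | nil =>
      refine ⟨[], ?_, by simp, by simp [rtlMax_nil]⟩
      subst hT
      show ss [0] = _
      rw [ss_cons]
      simp [blocksOf_nil, ss]
    | cons t ts =>
      -- max is the last element of T
      subst hT
      obtain ⟨T₀, tr, hT⟩ : ∃ T₀ tr, t :: ts = T₀ ++ [tr] := ⟨(t::ts).dropLast, (t::ts).getLast (by simp), (List.dropLast_append_getLast (by simp)).symm⟩
      have hlt : ∀ y ∈ (0 : ℕ) :: T₀, y < tr := by
        intro y hy
        rcases List.mem_cons.mp hy with rfl | hy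
        · have htr : tr ∈ t :: ts := by rw [hT]; simp
          exact Nat.pos_of_ne_zero (fun h => hT0 (h ▸ htr))
        · have hpair := hTs
          rw [hT] at hpair
          have := (List.pairwise_append.mp hpair).2.2 y hy tr (by simp)
          exact this
      have hsplit : ([] : List ℕ) ++ (0:ℕ) :: (t :: ts) = ((0:ℕ) :: T₀) ++ tr :: [] := by
        rw [hT]; simp
      have hss : ss ([] ++ (0:ℕ) :: (t :: ts)) = ss ((0:ℕ) :: T₀) ++ ss [] ++ [tr] := by
        rw [hsplit]
        refine ss_split ?_ ?_
        · intro hmem; exact absurd rfl (ne_of_lt (hlt tr hmem))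
        · intro y hy
          rcases List.mem_append.mp hy with hy | hy
          · exact le_of_lt (hlt y hy)
          · simp at hy; omega
      have hT₀s : T₀.Pairwise (· < ·) := by
        rw [hT] at hTs
        exact (List.pairwise_append.mp hTs).1
      have hT₀0 : (0:ℕ) ∉ T₀ := fun h => hT0 (by rw [hT]; exact List.mem_append_left _ h)
      have hnd' : (([] : List ℕ) ++ (0:ℕ) :: T₀).Nodup := by
        rw [hT] at hnd
        simp only [List.nil_append] at hnd ⊢
        exact List.Nodup.sublist
          (List.cons_sublist_cons.mpr (List.sublist_append_left T₀ [tr])) hnd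
      obtain ⟨T', h1, h2, h3⟩ := ih [] T₀ (by rw [hT] at hlen; simp at hlen ⊢; omega) hnd' (by simp) hT₀0 hT₀s
      refine ⟨T' ++ [tr], ?_, ?_, ?_⟩
      · rw [hss]
        simp only [List.nil_append] at h1
        rw [h1]
        simp [blocksOf_nil, ss]
      · rw [List.pairwise_append]
        refine ⟨h2, by simp, ?_⟩
        intro y hy tr' htr'
        simp at htr'
        subst htr'
        have : y ∈ rtlMax ([] : List ℕ) ++ T₀ := h3.mem_iff.mp hy
        rw [rtlMax_nil, List.nil_append] at this
        exact hlt y (List.mem_cons_of_mem _ this)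
      · rw [rtlMax_nil, List.nil_append, hT]
        exact h3.append (List.Perm.refl [tr]) |>.trans (by rw [rtlMax_nil, List.nil_append])
  · -- Q nonempty. Compare max of Q with last of T.
    have hndQ : Q.Nodup := (List.nodup_append.mp hnd).1
    set mQ := Q.foldr max 0 with hmQdef
    have hmQmem : mQ ∈ Q := by
      cases hq : Q with
      | nil => exact absurd hq hQnil
      | cons x xs => rw [hmQdef, hq]; exact foldrMaxMem x xs
    have hQle : ∀ y ∈ Q, y ≤ mQ := fun y hy => le_foldrMax hy
    -- case split: either some last element of T exceeds mQ, or all of T is below mQ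
    by_cases hcase : ∃ T₀ tr, T = T₀ ++ [tr] ∧ mQ < tr
    · -- peel the top element of T
      obtain ⟨T₀, tr, rfl, htr⟩ := hcase
      have hlt : ∀ y ∈ Q ++ 0 :: T₀, y < tr := by
        intro y hy
        rcases List.mem_append.mp hy with hy | hy
        · exact lt_of_le_of_lt (hQle y hy) htr
        · rcases List.mem_cons.mp hy with rfl | hy
          · have h0 : (0:ℕ) ∉ T₀ ++ [tr] := hT0
            have : tr ≠ 0 := fun h => h0 (by rw [h] at *; simp)
            omega
          · exact (List.pairwise_append.mp hTs).2.2 y hy tr (by simp)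
      have hsplit : Q ++ (0:ℕ) :: (T₀ ++ [tr]) = (Q ++ (0:ℕ) :: T₀) ++ tr :: [] := by
        simp
      have hss : ss (Q ++ (0:ℕ) :: (T₀ ++ [tr])) = ss (Q ++ (0:ℕ) :: T₀) ++ ss [] ++ [tr] := by
        rw [hsplit]
        refine ss_split (fun hmem => absurd rfl (ne_of_lt (hlt tr hmem))) ?_
        intro y hy
        rcases List.mem_append.mp hy with hy | hy
        · exact le_of_lt (hlt y hy)
        · simp at hy; omega
      have hT₀s : T₀.Pairwise (· < ·) := (List.pairwise_append.mp hTs).1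
      have hT₀0 : (0:ℕ) ∉ T₀ := fun h => hT0 (List.mem_append_left _ h)
      have hnd' : (Q ++ (0:ℕ) :: T₀).Nodup := by
        refine List.Nodup.sublist ?_ hnd
        refine List.Sublist.append_left ?_ Q
        exact List.cons_sublist_cons.mpr (List.sublist_append_left T₀ [tr])
      obtain ⟨T', h1, h2, h3⟩ := ih Q T₀ (by simp at hlen ⊢; omega) hnd' hQ0 hT₀0 hT₀s
      refine ⟨T' ++ [tr], ?_, ?_, ?_⟩
      · rw [hss, h1]
        simp [ss]
      · rw [List.pairwise_append]
        refine ⟨h2, by simp, ?_⟩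
        intro y hy tr' htr'
        simp only [List.mem_singleton] at htr'
        subst htr'
        rcases List.mem_append.mp (h3.mem_iff.mp hy) with hy' | hy'
        · exact hlt y (List.mem_append_left _ (rtlMax_subset Q y hy'))
        · exact hlt y (List.mem_append_right _ (List.mem_cons_of_mem _ hy'))
      · exact (h3.append (List.Perm.refl [tr])).trans (by rw [List.append_assoc])
    · -- the max of the whole list is mQ
      have hTlt : ∀ y ∈ T, y < mQ := by
        intro y hy
        cases hT : T with
        | nil => rw [hT] at hy; simp at hy
        | cons t ts =>
          obtain ⟨T₀, tr, hTd⟩ : ∃ T₀ tr, t :: ts = T₀ ++ [tr] :=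
            ⟨(t::ts).dropLast, (t::ts).getLast (by simp),
              (List.dropLast_append_getLast (by simp)).symm⟩
          rw [hT] at hy hT0 hnd hTs
          rw [hTd] at hy hT0 hnd hTs
          have htrQ : tr ∉ Q := by
            intro hc
            exact (List.nodup_append.mp hnd).2.2 _ hc _ (by simp) rfl
          have htrle : ¬ (mQ < tr) := fun hc => hcase ⟨T₀, tr, hT.trans hTd, hc⟩
          have htrne : tr ≠ mQ := fun h => htrQ (h ▸ hmQmem)
          have htrlt : tr < mQ := lt_of_le_of_ne (not_lt.mp htrle) htrne
          rcases List.mem_append.mp hy with hy | hy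
          · exact lt_trans ((List.pairwise_append.mp hTs).2.2 y hy tr (by simp)) htrlt
          · simp only [List.mem_singleton] at hy; subst hy; exact htrlt
      obtain ⟨b, Q', hQdec, hmb⟩ := exists_max_decomp Q hQnil
      have hmQ' : mQ ∉ Q' := by
        rw [hQdec] at hndQ
        have := (List.nodup_append.mp hndQ).2.1
        exact (List.nodup_cons.mp this).1
      have hble : ∀ y ∈ b, y < mQ := fun y hy =>
        lt_of_le_of_ne (hQle y (by rw [hQdec]; exact List.mem_append_left _ hy))
          (fun h => hmb (by subst h; exact hy))
      have hQ'le : ∀ y ∈ Q', y < mQ := fun y hy =>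
        lt_of_le_of_ne
          (hQle y (by rw [hQdec]; exact List.mem_append_right _ (List.mem_cons_of_mem _ hy)))
          (fun h => hmQ' (by subst h; exact hy))
      have hsplit : Q ++ (0:ℕ) :: T = b ++ mQ :: (Q' ++ (0:ℕ) :: T) := by
        rw [hQdec]; simp [hmQdef]
      have hss : ss (Q ++ (0:ℕ) :: T) = ss b ++ ss (Q' ++ (0:ℕ) :: T) ++ [mQ] := by
        rw [hsplit]
        refine ss_split hmb ?_
        intro y hy
        rcases List.mem_append.mp hy with hy | hy
        · exact le_of_lt (hble y hy)
        · rcases List.mem_cons.mp hy with rfl | hy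
          · exact le_rfl
          · rcases List.mem_append.mp hy with hy | hy
            · exact le_of_lt (hQ'le y hy)
            · rcases List.mem_cons.mp hy with rfl | hy
              · exact Nat.zero_le _
              · exact le_of_lt (hTlt y hy)
      have hnd' : (Q' ++ (0:ℕ) :: T).Nodup := by
        have hsub : List.Sublist (Q' ++ (0:ℕ) :: T) (Q ++ (0:ℕ) :: T) := by
          rw [hQdec, List.append_assoc]
          exact (List.sublist_cons_self _ _).trans (List.sublist_append_right _ _)
        exact List.Nodup.sublist hsub hnd
      have hQ'0 : (0:ℕ) ∉ Q' := fun h =>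
        hQ0 (by rw [hQdec]; exact List.mem_append_right _ (List.mem_cons_of_mem _ h))
      have hlen' : (Q' ++ (0:ℕ) :: T).length ≤ N := by
        have : Q.length = b.length + 1 + Q'.length := by
          rw [hQdec, List.length_append, List.length_cons]; omega
        simp at hlen ⊢; omega
      obtain ⟨T'', h1, h2, h3⟩ := ih Q' T hlen' hnd' hQ'0 hT0 hTs
      have hblocks : blocksOf Q = b :: blocksOf Q' := hQdec ▸ blocksOf_append b Q' mQ hble hQ'le
      have hrtl : rtlMax Q = mQ :: rtlMax Q' := hQdec ▸ rtlMax_append b Q' mQ hble hQ'le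
      refine ⟨T'' ++ [mQ], ?_, ?_, ?_⟩
      · rw [hss, h1, hblocks]
        simp [List.append_assoc]
      · rw [List.pairwise_append]
        refine ⟨h2, by simp, ?_⟩
        intro y hy m' hm'
        simp only [List.mem_singleton] at hm'
        subst hm'
        rcases List.mem_append.mp (h3.mem_iff.mp hy) with hy' | hy'
        · exact hQ'le y (rtlMax_subset Q' y hy')
        · exact hTlt y hy'
      · rw [hrtl]
        exact (h3.append (List.Perm.refl [mQ])).trans
          ((List.perm_append_singleton _ _).trans (by rw [List.cons_append]))

end StackAux

namespace StackAux

set_option linter.deprecated false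

/-- the sequence of prefixes through the iteration -/
def Qseq (Q0 : List ℕ) : ℕ → List ℕ
  | 0 => Q0
  | k + 1 => ((blocksOf (Qseq Q0 k)).map ss).flatten

/-- the full trajectory invariant -/
theorem traj (Q0 : List ℕ) (hnd : (Q0 ++ [0]).Nodup) (hQ0 : (0:ℕ) ∉ Q0) (k : ℕ) :
    ∃ T : List ℕ, ss^[k] (Q0 ++ [0]) = Qseq Q0 k ++ 0 :: T ∧ T.Pairwise (· < ·) ∧
      (Qseq Q0 k ++ 0 :: T).Nodup ∧ (0:ℕ) ∉ Qseq Q0 k ∧ (0:ℕ) ∉ T ∧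
      (Qseq Q0 k ++ T).Perm Q0 := by
  induction k with
  | zero =>
    exact ⟨[], by simp [Qseq], by simp, hnd, hQ0, by simp, by simp [Qseq]⟩
  | succ k ih =>
    obtain ⟨T, h1, h2, h3, h4, h5, h6⟩ := ih
    obtain ⟨T', g1, g2, g3⟩ :=
      ss_step (Qseq Q0 k ++ 0 :: T).length (Qseq Q0 k) T le_rfl h3 h4 h5 h2
    have hQs : Qseq Q0 (k+1) = ((blocksOf (Qseq Q0 k)).map ss).flatten := rfl
    have hQperm : (Qseq Q0 (k+1) ++ rtlMax (Qseq Q0 k)).Perm (Qseq Q0 k) := by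
      rw [hQs]
      refine List.Perm.trans ?_ (blocks_perm (Qseq Q0 k))
      refine List.Perm.append ?_ (List.Perm.refl _)
      induction blocksOf (Qseq Q0 k) with
      | nil => simp
      | cons b bs ihb => simpa using (ss_perm b).append ihb
    have e2a : (Qseq Q0 (k+1) ++ T').Perm ((Qseq Q0 (k+1) ++ rtlMax (Qseq Q0 k)) ++ T) := by
      rw [List.append_assoc]
      exact List.Perm.append_left _ g3
    have e2 : (Qseq Q0 (k+1) ++ T').Perm Q0 :=
      e2a.trans ((hQperm.append (List.Perm.refl T)).trans h6)
    have e1 : (Qseq Q0 (k+1) ++ 0 :: T').Perm (0 :: (Qseq Q0 (k+1) ++ T')) := List.perm_middle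
    have heq : ss^[k+1] (Q0 ++ [0]) = Qseq Q0 (k+1) ++ 0 :: T' := by
      rw [Function.iterate_succ_apply', h1, g1, hQs]
    have hnodup : (Qseq Q0 (k+1) ++ 0 :: T').Nodup := by
      have hperm : (Qseq Q0 (k+1) ++ 0 :: T').Perm (Q0 ++ [0]) :=
        (e1.trans (e2.cons 0)).trans (List.perm_append_singleton 0 Q0).symm
      exact hperm.nodup_iff.mpr hnd
    refine ⟨T', heq, g2, hnodup, ?_, ?_, e2⟩
    · intro h
      exact hQ0 (e2.mem_iff.mp (List.mem_append_left _ h))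
    · intro h
      exact hQ0 (e2.mem_iff.mp (List.mem_append_right _ h))

end StackAux

namespace StackAux

set_option linter.deprecated false

theorem Qseq_succ_perm (Q0 : List ℕ) (k : ℕ) :
    (Qseq Q0 (k+1) ++ rtlMax (Qseq Q0 k)).Perm (Qseq Q0 k) := by
  show (((blocksOf (Qseq Q0 k)).map ss).flatten ++ rtlMax (Qseq Q0 k)).Perm _
  refine List.Perm.trans ?_ (blocks_perm (Qseq Q0 k))
  refine List.Perm.append ?_ (List.Perm.refl _)
  induction blocksOf (Qseq Q0 k) with
  | nil => simp
  | cons b bs ihb => simpa using (ss_perm b).append ihb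

theorem takeWhile_ne_zero {Q T : List ℕ} (hQ0 : (0:ℕ) ∉ Q) :
    (Q ++ 0 :: T).takeWhile (fun x => x ≠ 0) = Q := by
  rw [List.takeWhile_append_of_pos (fun a ha => by
    simp only [ne_eq, decide_eq_true_eq]; exact fun h => hQ0 (h ▸ ha))]
  simp

section Traj

variable {Q0 : List ℕ} (hnd : (Q0 ++ [0]).Nodup) (hQ0 : (0:ℕ) ∉ Q0)

include hnd hQ0

theorem prefixAt_eq (i : ℕ) : prefixAt (Q0 ++ [0]) i = Qseq Q0 (i - 1) := by
  obtain ⟨T, h1, _, _, h4, _, _⟩ := traj Q0 hnd hQ0 (i - 1)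
  rw [prefixAt, h1, takeWhile_ne_zero h4]

theorem colSeqAt_eq (i : ℕ) : colSeqAt (Q0 ++ [0]) i = rtlMax (Qseq Q0 (i - 1)) := by
  rw [colSeqAt, prefixAt_eq hnd hQ0]

theorem blocksAt_eq (i : ℕ) : blocksAt (Q0 ++ [0]) i = blocksOf (Qseq Q0 (i - 1)) := by
  rw [blocksAt, prefixAt_eq hnd hQ0]

theorem Qseq_nodup (k : ℕ) : (Qseq Q0 k).Nodup := by
  obtain ⟨T, _, _, h3, _, _, _⟩ := traj Q0 hnd hQ0 k
  exact (List.nodup_append.mp h3).1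

/-- dichotomy: an entry of `Qseq k` survives to `Qseq (k+1)` iff it is not an rtl maximum -/
theorem Qseq_mem_succ {k v} (hv : v ∈ Qseq Q0 k) :
    (v ∈ Qseq Q0 (k+1) ↔ v ∉ rtlMax (Qseq Q0 k)) := by
  have hperm := Qseq_succ_perm Q0 k
  have hnd' : (Qseq Q0 (k+1) ++ rtlMax (Qseq Q0 k)).Nodup :=
    hperm.nodup_iff.mpr (Qseq_nodup hnd hQ0 k)
  have hv' : v ∈ Qseq Q0 (k+1) ++ rtlMax (Qseq Q0 k) := hperm.mem_iff.mpr hv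
  constructor
  · intro h1 h2
    exact (List.nodup_append.mp hnd').2.2 _ h1 _ h2 rfl
  · intro h2
    rcases List.mem_append.mp hv' with h | h
    · exact h
    · exact absurd h h2

theorem Qseq_mem_of_succ {k v} (hv : v ∈ Qseq Q0 (k+1)) : v ∈ Qseq Q0 k :=
  (Qseq_succ_perm Q0 k).mem_iff.mp (List.mem_append_left _ hv)

theorem Qseq_mem_mono {k k' v} (hkk : k ≤ k') (hv : v ∈ Qseq Q0 k') : v ∈ Qseq Q0 k := by
  induction k' with
  | zero => rwa [Nat.le_zero.mp hkk]
  | succ k' ih =>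
    rcases Nat.lt_or_ge k (k'+1) with h | h
    · exact ih (by omega) (Qseq_mem_of_succ hnd hQ0 hv)
    · rwa [le_antisymm hkk h]

omit hnd hQ0

theorem Qseq_empty_succ {k} (h : Qseq Q0 k = []) : Qseq Q0 (k+1) = [] := by
  show ((blocksOf (Qseq Q0 k)).map ss).flatten = []
  rw [h, blocksOf_nil]
  rfl

theorem Qseq_empty_mono {k k'} (hkk : k ≤ k') (h : Qseq Q0 k = []) : Qseq Q0 k' = [] := by
  induction k' with
  | zero => rwa [Nat.le_zero.mp hkk] at h
  | succ k' ih =>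
    rcases Nat.lt_or_ge k (k'+1) with hl | hl
    · exact Qseq_empty_succ (ih (by omega))
    · rwa [← le_antisymm hkk hl]

include hnd hQ0

theorem Qseq_len {k} (h : Qseq Q0 k ≠ []) :
    (Qseq Q0 (k+1)).length + (rtlMax (Qseq Q0 k)).length = (Qseq Q0 k).length := by
  have := (Qseq_succ_perm Q0 k).length_eq
  simpa using this

theorem Qseq_eventually_empty : Qseq Q0 (Q0.length) = [] := by
  have key : ∀ k, Qseq Q0 k = [] ∨ (Qseq Q0 k).length + k ≤ Q0.length := by
    intro k
    induction k with
    | zero => right; simp [Qseq]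
    | succ k ih =>
      rcases ih with h | h
      · left; exact Qseq_empty_succ h
      · by_cases hk : Qseq Q0 k = []
        · left; exact Qseq_empty_succ hk
        · right
          have h1 := Qseq_len hnd hQ0 hk
          have h2 : rtlMax (Qseq Q0 k) ≠ [] := rtlMax_nonempty _ hk
          have h3 : 0 < (rtlMax (Qseq Q0 k)).length := List.length_pos_iff.mpr h2
          omega
  rcases key Q0.length with h | h
  · exact h
  · exact List.length_eq_zero_iff.mp (by omega)

end Traj

end StackAux

namespace StackAux

set_option linter.deprecated false
set_option linter.unusedSectionVars false

section Traj

variable {Q0 : List ℕ} (hnd : (Q0 ++ [0]).Nodup) (hQ0 : (0:ℕ) ∉ Q0)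

/-- first time `v` has left the prefix -/
noncomputable def colv (Q0 : List ℕ) (v : ℕ) : ℕ := sInf {k | v ∉ Qseq Q0 k}

/-- total number of iterations needed -/
noncomputable def Mval (Q0 : List ℕ) : ℕ := sInf {k | Qseq Q0 k = []}

include hnd hQ0

theorem colv_set_nonempty (v : ℕ) : {k | v ∉ Qseq Q0 k}.Nonempty :=
  ⟨Q0.length, by simp [Set.mem_setOf_eq, Qseq_eventually_empty hnd hQ0]⟩

theorem Mval_set_nonempty : {k | Qseq Q0 k = []}.Nonempty :=
  ⟨Q0.length, Qseq_eventually_empty hnd hQ0⟩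

theorem Qseq_Mval : Qseq Q0 (Mval Q0) = [] := Nat.sInf_mem (Mval_set_nonempty hnd hQ0)

theorem Qseq_ne_of_lt_Mval {k : ℕ} (h : k < Mval Q0) : Qseq Q0 k ≠ [] :=
  Nat.notMem_of_lt_sInf h

theorem Qseq_empty_iff {k : ℕ} : Qseq Q0 k = [] ↔ Mval Q0 ≤ k := by
  constructor
  · intro h
    by_contra hc
    exact Qseq_ne_of_lt_Mval hnd hQ0 (by omega) h
  · intro h
    exact Qseq_empty_mono h (Qseq_Mval hnd hQ0)

theorem colv_pos {v : ℕ} (hv : v ∈ Q0) : 1 ≤ colv Q0 v := by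
  rcases Nat.eq_zero_or_pos (colv Q0 v) with h | h
  · exfalso
    have := Nat.sInf_mem (colv_set_nonempty hnd hQ0 v)
    rw [colv] at h
    rw [h] at this
    exact this hv
  · exact h

theorem mem_Qseq_iff_lt_colv {v k : ℕ} (hv : v ∈ Q0) : v ∈ Qseq Q0 k ↔ k < colv Q0 v := by
  constructor
  · intro h
    by_contra hc
    have hnot : v ∉ Qseq Q0 (colv Q0 v) := Nat.sInf_mem (colv_set_nonempty hnd hQ0 v)
    exact hnot (Qseq_mem_mono hnd hQ0 (by omega) h)
  · intro h
    by_contra hc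
    have h2 : colv Q0 v ≤ k := Nat.sInf_le (show k ∈ {k | v ∉ Qseq Q0 k} from hc)
    omega

theorem mem_rtlMax_iff_colv {v k : ℕ} (hv : v ∈ Q0) :
    v ∈ rtlMax (Qseq Q0 k) ↔ k + 1 = colv Q0 v := by
  constructor
  · intro h
    have h1 : v ∈ Qseq Q0 k := rtlMax_subset _ v h
    have h2 : k < colv Q0 v := (mem_Qseq_iff_lt_colv hnd hQ0 hv).mp h1
    have h3 : v ∉ Qseq Q0 (k+1) := fun hc => ((Qseq_mem_succ hnd hQ0 h1).mp hc) h
    have h4 : ¬ (k + 1 < colv Q0 v) := fun hc =>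
      h3 ((mem_Qseq_iff_lt_colv hnd hQ0 hv).mpr hc)
    omega
  · intro h
    have h1 : v ∈ Qseq Q0 k := (mem_Qseq_iff_lt_colv hnd hQ0 hv).mpr (by omega)
    have h3 : v ∉ Qseq Q0 (k+1) := by
      rw [mem_Qseq_iff_lt_colv hnd hQ0 hv]; omega
    by_contra hc
    exact h3 ((Qseq_mem_succ hnd hQ0 h1).mpr hc)

theorem colv_le_Mval {v : ℕ} : colv Q0 v ≤ Mval Q0 :=
  Nat.sInf_le (by simp [Set.mem_setOf_eq, Qseq_Mval hnd hQ0])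

/-- identification of `colOf` with `colv` -/
theorem colOf_eq {v : ℕ} (hv : v ∈ Q0) : colOf (Q0 ++ [0]) v = colv Q0 v := by
  have hset : {i | 1 ≤ i ∧ v ∈ colSeqAt (Q0 ++ [0]) i} = {colv Q0 v} := by
    ext i
    simp only [Set.mem_setOf_eq, Set.mem_singleton_iff]
    constructor
    · rintro ⟨h1, h2⟩
      rw [colSeqAt_eq hnd hQ0, mem_rtlMax_iff_colv hnd hQ0 hv] at h2
      omega
    · rintro rfl
      have h1 := colv_pos hnd hQ0 hv
      refine ⟨h1, ?_⟩
      rw [colSeqAt_eq hnd hQ0, mem_rtlMax_iff_colv hnd hQ0 hv]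
      omega
  rw [colOf, hset, csInf_singleton]

/-- membership in a column sequence implies membership of `Q0` with the right column index -/
theorem mem_colSeqAt {v i : ℕ} (hi : 1 ≤ i) (h : v ∈ colSeqAt (Q0 ++ [0]) i) :
    v ∈ Q0 ∧ i = colv Q0 v := by
  rw [colSeqAt_eq hnd hQ0] at h
  have hv : v ∈ Q0 := Qseq_mem_mono hnd hQ0 (Nat.zero_le _) (rtlMax_subset _ v h)
  rw [mem_rtlMax_iff_colv hnd hQ0 hv] at h
  exact ⟨hv, by omega⟩

theorem sorted_iter_iff {k : ℕ} :
    List.Pairwise (· < ·) (ss^[k] (Q0 ++ [0])) ↔ Qseq Q0 k = [] := by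
  obtain ⟨T, h1, h2, h3, h4, h5, h6⟩ := traj Q0 hnd hQ0 k
  rw [h1]
  constructor
  · intro hs
    cases hq : Qseq Q0 k with
    | nil => rfl
    | cons q r =>
      exfalso
      rw [hq] at hs
      have := (List.pairwise_append.mp hs).2.2 q (by simp) 0 (by simp)
      omega
  · intro hq
    rw [hq, List.nil_append, List.pairwise_cons]
    refine ⟨fun b hb => Nat.pos_of_ne_zero (fun h => h5 (h ▸ hb)), h2⟩

theorem met_eq : met (Q0 ++ [0]) = Mval Q0 := by
  have h1 : ∀ k, List.Pairwise (· < ·) (ss^[k] (Q0 ++ [0])) ↔ Mval Q0 ≤ k := by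
    intro k
    rw [sorted_iter_iff hnd hQ0, Qseq_empty_iff hnd hQ0]
  have hset : {k | List.Pairwise (· < ·) (ss^[k] (Q0 ++ [0]))} = {k | Mval Q0 ≤ k} := by
    ext k; exact h1 k
  rw [met, hset]
  refine le_antisymm (Nat.sInf_le ?_) (le_csInf ⟨Mval Q0, ?_⟩ fun b hb => hb)
  · simp
  · simp

/-- each positive column index up to `Mval` is realized -/
theorem exists_colv_eq {i : ℕ} (h1 : 1 ≤ i) (h2 : i ≤ Mval Q0) :
    ∃ v ∈ Q0, colv Q0 v = i := by
  have hne : Qseq Q0 (i-1) ≠ [] := Qseq_ne_of_lt_Mval hnd hQ0 (by omega)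
  obtain ⟨v, hv⟩ := List.exists_mem_of_ne_nil _ (rtlMax_nonempty _ hne)
  have hvQ : v ∈ Q0 := Qseq_mem_mono hnd hQ0 (Nat.zero_le _) (rtlMax_subset _ v hv)
  refine ⟨v, hvQ, ?_⟩
  have := (mem_rtlMax_iff_colv hnd hQ0 hvQ).mp hv
  omega

end Traj

end StackAux

namespace StackAux

set_option linter.deprecated false
set_option linter.unusedSectionVars false

theorem nodup_split_unique : ∀ {l t₁ t₂ s₁ s₂ : List ℕ} {v : ℕ}, l.Nodup →
    l = t₁ ++ v :: t₂ → l = s₁ ++ v :: s₂ → t₁ = s₁ ∧ t₂ = s₂ := by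
  intro l t₁
  induction t₁ generalizing l with
  | nil =>
    intro t₂ s₁ s₂ v h h1 h2
    subst h1
    cases s₁ with
    | nil => simp at h2; exact ⟨rfl, h2⟩
    | cons a s₁' =>
      simp only [List.nil_append, List.cons_append, List.cons.injEq] at h2
      obtain ⟨rfl, h2⟩ := h2
      exfalso
      have : v ∈ t₂ := h2 ▸ List.mem_append_right _ (by simp)
      exact (List.nodup_cons.mp h).1 this
  | cons a t₁' ih =>
    intro t₂ s₁ s₂ v h h1 h2
    subst h1
    cases s₁ with
    | nil =>
      simp only [List.cons_append, List.nil_append, List.cons.injEq] at h2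
      obtain ⟨h2a, h2b⟩ := h2
      subst h2a
      exact absurd (List.mem_append_right t₁' (by simp)) (List.nodup_cons.mp h).1
    | cons a' s₁' =>
      simp only [List.cons_append, List.cons.injEq] at h2
      obtain ⟨rfl, h2⟩ := h2
      have := ih (l := t₁' ++ v :: t₂) (List.nodup_cons.mp h).2 rfl h2
      exact ⟨by rw [this.1], this.2⟩

theorem getLast_eq_of_eq {l l' : List ℕ} (h : l = l') (h1 : l ≠ []) (h2 : l' ≠ []) :
    l.getLast h1 = l'.getLast h2 := by subst h; rfl

theorem ss_getLast (b : List ℕ) (hb : b ≠ []) :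
    ∃ u, ss b = u ++ [b.foldr max 0] := by
  rw [ss_eq b hb]
  exact ⟨_, rfl⟩

theorem mem_b_le_max {b : List ℕ} {v : ℕ} (h : v ∈ ss b) : v ≤ b.foldr max 0 :=
  le_foldrMax ((ss_perm b).mem_iff.mp h)

/-- an rtl maximum of a join of `ss`-images of blocks must be the max of one of the blocks -/
theorem rtlMax_join_mem_maxes {bs : List (List ℕ)}
    (hnd : ((bs.map ss).flatten).Nodup) {v : ℕ} (hv : v ∈ rtlMax ((bs.map ss).flatten)) :
    v ∈ bs.map (fun b => b.foldr max 0) := by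
  obtain ⟨t₁, t₂, hdec, hlt⟩ := mem_rtlMax_iff.mp hv
  have hvmem : v ∈ (bs.map ss).flatten := by rw [hdec]; simp
  rw [List.mem_flatten] at hvmem
  obtain ⟨sb, hsb, hvsb⟩ := hvmem
  rw [List.mem_map] at hsb
  obtain ⟨b, hb, rfl⟩ := hsb
  have hbne : b ≠ [] := by
    intro h; subst h; rw [ss] at hvsb; simp at hvsb
  rw [List.mem_map]
  refine ⟨b, hb, ?_⟩
  by_contra hne
  -- v < max b, and max b occurs after v in the join
  have hvlt : v < b.foldr max 0 := lt_of_le_of_ne (mem_b_le_max hvsb) (fun h => hne h.symm)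
  -- split the join around ss b
  obtain ⟨A, B, hAB⟩ : ∃ A B, (bs.map ss).flatten = A ++ ss b ++ B := by
    obtain ⟨p, q, hpq⟩ := List.append_of_mem (List.mem_map_of_mem (f := ss) hb)
    exact ⟨p.flatten, q.flatten, by rw [hpq]; simp⟩
  obtain ⟨u₁, u₂, hu⟩ := List.append_of_mem hvsb
  have hmlast : b.foldr max 0 ∈ v :: u₂ := by
    obtain ⟨u, huu⟩ := ss_getLast b hbne
    rw [hu] at huu
    -- u₁ ++ v :: u₂ = u ++ [max b]
    have hne2 : u₁ ++ v :: u₂ ≠ [] := by simp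
    have h1 : (u₁ ++ v :: u₂).getLast hne2 = b.foldr max 0 := by
      rw [getLast_eq_of_eq huu hne2 (by simp), List.getLast_append]
      simp
    have h2 : (u₁ ++ v :: u₂).getLast hne2 ∈ v :: u₂ := by
      rw [List.getLast_append]
      simp only [List.isEmpty_cons, Bool.false_eq_true, reduceDIte]
      exact List.getLast_mem _
    rwa [h1] at h2
  have hmem2 : b.foldr max 0 ∈ u₂ := by
    rcases List.mem_cons.mp hmlast with h | h
    · exact absurd h.symm (by omega)
    · exact h
  -- now the global decomposition
  have hdec2 : (bs.map ss).flatten = (A ++ u₁) ++ v :: (u₂ ++ B) := by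
    rw [hAB, hu]; simp
  obtain ⟨_, ht2⟩ := nodup_split_unique hnd hdec hdec2
  have : b.foldr max 0 < v := hlt _ (by rw [ht2]; exact List.mem_append_left _ hmem2)
  omega

end StackAux

namespace StackAux

set_option linter.deprecated false
set_option linter.unusedSectionVars false

section Traj

variable {Q0 : List ℕ} (hnd : (Q0 ++ [0]).Nodup) (hQ0 : (0:ℕ) ∉ Q0)

include hnd hQ0

theorem leftOf_key {v i : ℕ} (hv : v ∈ Q0) (hi : colv Q0 v = i) (h2 : 2 ≤ i) :
    ∃ j : Fin (rtlMax (Qseq Q0 (i-2))).length,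
      leftOf (Q0 ++ [0]) v = (rtlMax (Qseq Q0 (i-2))).get j ∧
      ∃ hj : (((blocksOf (Qseq Q0 (i-2))).map (fun b => b.foldr max 0)).idxOf v) <
          ((blocksOf (Qseq Q0 (i-2))).map (fun b => b.foldr max 0)).length,
        (((blocksOf (Qseq Q0 (i-2))).map (fun b => b.foldr max 0)).idxOf v) = j.val := by
  set maxes := (blocksOf (Qseq Q0 (i-2))).map (fun b => b.foldr max 0) with hmaxes
  have hi1 : i - 1 = (i - 2) + 1 := by omega
  have hQ1 : Qseq Q0 (i-1) = ((blocksOf (Qseq Q0 (i-2))).map ss).flatten := by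
    rw [hi1]; rfl
  have hvr : v ∈ rtlMax (Qseq Q0 (i-1)) := by
    rw [mem_rtlMax_iff_colv hnd hQ0 hv]; omega
  have hnd1 : (Qseq Q0 (i-1)).Nodup := Qseq_nodup hnd hQ0 (i-1)
  have hmax : v ∈ maxes := by
    rw [hmaxes]
    exact rtlMax_join_mem_maxes (hQ1 ▸ hnd1) (hQ1 ▸ hvr)
  have hjlt : maxes.idxOf v < maxes.length := List.idxOf_lt_length_iff.mpr hmax
  have hlen : maxes.length = (rtlMax (Qseq Q0 (i-2))).length := by
    rw [hmaxes, List.length_map, length_blocksOf]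
  have hcol : colOf (Q0 ++ [0]) v = i := by rw [colOf_eq hnd hQ0 hv, hi]
  have he : i - 1 - 1 = i - 2 := by omega
  have hcolSeq : colSeqAt (Q0 ++ [0]) (i - 1) = rtlMax (Qseq Q0 (i-2)) := by
    rw [colSeqAt_eq hnd hQ0, he]
  have hblocks : blocksAt (Q0 ++ [0]) (i - 1) = blocksOf (Qseq Q0 (i-2)) := by
    rw [blocksAt_eq hnd hQ0, he]
  refine ⟨⟨maxes.idxOf v, by omega⟩, ?_, hjlt, rfl⟩
  rw [leftOf, hcol, hcolSeq, hblocks, ← hmaxes]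
  rw [List.getD_eq_getElem _ _ (by omega)]
  rfl

theorem leftOf_mem {v i : ℕ} (hv : v ∈ Q0) (hi : colv Q0 v = i) (h2 : 2 ≤ i) :
    leftOf (Q0 ++ [0]) v ∈ Q0 ∧ colv Q0 (leftOf (Q0 ++ [0]) v) = i - 1 := by
  obtain ⟨j, hj1, _⟩ := leftOf_key hnd hQ0 hv hi h2
  have hmem : leftOf (Q0 ++ [0]) v ∈ rtlMax (Qseq Q0 (i-2)) := by
    rw [hj1]; exact List.get_mem _ _
  have hQmem : leftOf (Q0 ++ [0]) v ∈ Q0 :=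
    Qseq_mem_mono hnd hQ0 (Nat.zero_le _) (rtlMax_subset _ _ hmem)
  refine ⟨hQmem, ?_⟩
  have := (mem_rtlMax_iff_colv hnd hQ0 hQmem).mp hmem
  omega

theorem leftOf_inj {u v i : ℕ} (hu : u ∈ Q0) (hv : v ∈ Q0) (hiu : colv Q0 u = i)
    (hiv : colv Q0 v = i) (h2 : 2 ≤ i) (hne : u ≠ v) :
    leftOf (Q0 ++ [0]) u ≠ leftOf (Q0 ++ [0]) v := by
  obtain ⟨ju, hju1, hju2, hju3⟩ := leftOf_key hnd hQ0 hu hiu h2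
  obtain ⟨jv, hjv1, hjv2, hjv3⟩ := leftOf_key hnd hQ0 hv hiv h2
  have hndr : (rtlMax (Qseq Q0 (i-2))).Nodup :=
    List.Pairwise.imp (fun h => ne_of_gt h) (rtlMax_sorted (Qseq Q0 (i-2)))
  intro hc
  rw [hju1, hjv1] at hc
  have hj : ju = jv := hndr.get_inj_iff.mp hc
  apply hne
  set maxes := (blocksOf (Qseq Q0 (i-2))).map (fun b => b.foldr max 0) with hmaxes
  have h1 : maxes[maxes.idxOf u] = u := List.getElem_idxOf hju2
  have h2' : maxes[maxes.idxOf v] = v := List.getElem_idxOf hjv2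
  rw [← h1, ← h2']
  congr 1
  rw [hju3, hjv3, hj]

theorem iter_leftOf {v : ℕ} (hv : v ∈ Q0) :
    ∀ t, t < colv Q0 v → ((leftOf (Q0 ++ [0]))^[t] v ∈ Q0 ∧
      colv Q0 ((leftOf (Q0 ++ [0]))^[t] v) = colv Q0 v - t) := by
  intro t
  induction t with
  | zero => intro _; exact ⟨hv, by simp⟩
  | succ t ih =>
    intro ht
    obtain ⟨h1, h2⟩ := ih (by omega)
    rw [Function.iterate_succ_apply']
    have := leftOf_mem hnd hQ0 h1 h2 (by omega)
    exact ⟨this.1, by omega⟩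

theorem iter_leftOf_inj {u v : ℕ} (hu : u ∈ Q0) (hv : v ∈ Q0)
    (hcol : colv Q0 u = colv Q0 v) (hne : u ≠ v) :
    ∀ t, t < colv Q0 v → (leftOf (Q0 ++ [0]))^[t] u ≠ (leftOf (Q0 ++ [0]))^[t] v := by
  intro t
  induction t with
  | zero => intro _; simpa using hne
  | succ t ih =>
    intro ht
    rw [Function.iterate_succ_apply', Function.iterate_succ_apply']
    obtain ⟨m1, m2⟩ := iter_leftOf hnd hQ0 hu t (by omega)
    obtain ⟨m3, m4⟩ := iter_leftOf hnd hQ0 hv t (by omega)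
    exact leftOf_inj hnd hQ0 (i := colv Q0 v - t) m1 m3 (by omega) (by omega) (by omega)
      (ih (by omega))

theorem rowOf_indexOf {v : ℕ} (hv : v ∈ Q0) :
    rowOf (Q0 ++ [0]) v =
      (rtlMax Q0).idxOf ((leftOf (Q0 ++ [0]))^[colv Q0 v - 1] v) + 1 := by
  have hpos := colv_pos hnd hQ0 hv
  obtain ⟨e1, e2⟩ := iter_leftOf hnd hQ0 hv (colv Q0 v - 1) (by omega)
  have hend : (leftOf (Q0 ++ [0]))^[colv Q0 v - 1] v ∈ rtlMax (Qseq Q0 0) := by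
    rw [mem_rtlMax_iff_colv hnd hQ0 e1]; omega
  rw [rowOf, colOf_eq hnd hQ0 hv, colposOf, colOf_eq hnd hQ0 e1]
  have h1 : colv Q0 ((leftOf (Q0 ++ [0]))^[colv Q0 v - 1] v) = 1 := by omega
  rw [h1, colSeqAt_eq hnd hQ0]
  rfl

theorem endv_mem {v : ℕ} (hv : v ∈ Q0) :
    (leftOf (Q0 ++ [0]))^[colv Q0 v - 1] v ∈ rtlMax Q0 := by
  have hpos := colv_pos hnd hQ0 hv
  obtain ⟨e1, e2⟩ := iter_leftOf hnd hQ0 hv (colv Q0 v - 1) (by omega)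
  have : (leftOf (Q0 ++ [0]))^[colv Q0 v - 1] v ∈ rtlMax (Qseq Q0 0) := by
    rw [mem_rtlMax_iff_colv hnd hQ0 e1]; omega
  exact this

theorem rowOf_bounds {v : ℕ} (hv : v ∈ Q0) :
    1 ≤ rowOf (Q0 ++ [0]) v ∧ rowOf (Q0 ++ [0]) v ≤ (rtlMax Q0).length := by
  rw [rowOf_indexOf hnd hQ0 hv]
  have := List.idxOf_lt_length_iff.mpr (endv_mem hnd hQ0 hv)
  omega

theorem rowOf_inj_same_col {u v : ℕ} (hu : u ∈ Q0) (hv : v ∈ Q0)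
    (hcol : colv Q0 u = colv Q0 v) (hrow : rowOf (Q0 ++ [0]) u = rowOf (Q0 ++ [0]) v) :
    u = v := by
  by_contra hne
  have hpos := colv_pos hnd hQ0 hv
  have hiter := iter_leftOf_inj hnd hQ0 hu hv hcol hne (colv Q0 v - 1) (by omega)
  rw [rowOf_indexOf hnd hQ0 hu, rowOf_indexOf hnd hQ0 hv, hcol] at hrow
  have hIeq : (rtlMax Q0).idxOf ((leftOf (Q0 ++ [0]))^[colv Q0 v - 1] u)
      = (rtlMax Q0).idxOf ((leftOf (Q0 ++ [0]))^[colv Q0 v - 1] v) := by omega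
  have heu : (leftOf (Q0 ++ [0]))^[colv Q0 v - 1] u ∈ rtlMax Q0 := by
    have := endv_mem hnd hQ0 hu
    rwa [hcol] at this
  have hev := endv_mem hnd hQ0 hv
  exact hiter ((List.idxOf_inj heu).mp hIeq)

theorem rowOf_iter {v t : ℕ} (hv : v ∈ Q0) (ht : t ≤ colv Q0 v - 1) :
    rowOf (Q0 ++ [0]) ((leftOf (Q0 ++ [0]))^[t] v) = rowOf (Q0 ++ [0]) v := by
  have hpos := colv_pos hnd hQ0 hv
  obtain ⟨m1, m2⟩ := iter_leftOf hnd hQ0 hv t (by omega)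
  rw [rowOf_indexOf hnd hQ0 m1, rowOf_indexOf hnd hQ0 hv, m2]
  congr 2
  rw [← Function.iterate_add_apply]
  congr 1
  omega

end Traj

end StackAux

set_option linter.deprecated false in
set_option linter.unusedSectionVars false in
open StackAux in
/-- `π ∈ Sₙ'` is `t`-stack-sortable iff `w(α_π) ≤ t`; equivalently `met(π) = w(α_π)`. -/
theorem stmt_19 (n t : ℕ) (π : List ℕ) (hπ : π.Perm (List.range (n + 1)))
    (h0 : π.getLast? = some 0) :
    (met π ≤ t ↔ (alphaOf π).foldr max 0 ≤ t) ∧ met π = (alphaOf π).foldr max 0 := by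
  -- set up the decomposition π = Q0 ++ [0]
  have hne : π ≠ [] := by
    intro h; rw [h] at h0; simp at h0
  obtain ⟨Q0, hπeq⟩ : ∃ Q0, π = Q0 ++ [0] := by
    refine ⟨π.dropLast, ?_⟩
    have h1 := List.dropLast_append_getLast hne
    have h2 : π.getLast hne = 0 := by
      have := List.getLast?_eq_getLast hne
      rw [h0] at this
      exact (Option.some_injective _ this.symm)
    rw [h2] at h1
    exact h1.symm
  subst hπeq
  have hndπ : (Q0 ++ [0]).Nodup := hπ.nodup_iff.mpr List.nodup_range
  have hQ0 : (0:ℕ) ∉ Q0 := by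
    have := (List.nodup_append.mp hndπ).2.2
    intro h
    exact this _ h _ (by simp) rfl
  have hlenπ : (Q0 ++ [0]).length = n + 1 := by rw [hπ.length_eq, List.length_range]
  have hmemQ0 : ∀ v, v ∈ Q0 ↔ (1 ≤ v ∧ v ≤ n) := by
    intro v
    constructor
    · intro hv
      have h1 : v ∈ List.range (n+1) := hπ.mem_iff.mp (List.mem_append_left _ hv)
      rw [List.mem_range] at h1
      have h2 : v ≠ 0 := fun h => hQ0 (h ▸ hv)
      omega
    · rintro ⟨h1, h2⟩
      have h3 : v ∈ Q0 ++ [0] := hπ.mem_iff.mpr (List.mem_range.mpr (by omega))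
      rcases List.mem_append.mp h3 with h | h
      · exact h
      · simp at h; omega
  set M := Mval Q0 with hM
  have hmet : met (Q0 ++ [0]) = M := met_eq hndπ hQ0
  set L := (colSeqAt (Q0 ++ [0]) 1).length with hL
  have hLr : colSeqAt (Q0 ++ [0]) 1 = rtlMax Q0 := colSeqAt_eq hndπ hQ0 1
  have hπlen : (Q0 ++ [0]).length - 1 = n := by omega
  -- Upper bound: every entry of alphaOf is at most M
  have hupper : ∀ a ∈ alphaOf (Q0 ++ [0]), a ≤ M := by
    intro a ha
    rw [alphaOf, List.mem_map] at ha
    obtain ⟨j, hj, rfl⟩ := ha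
    rw [hπlen]
    calc ((Finset.Icc 1 n).filter (fun v => rowOf (Q0 ++ [0]) v = j)).card
        ≤ (Finset.Icc 1 M).card := by
          refine Finset.card_le_card_of_injOn (fun v => colv Q0 v) ?_ ?_
          · intro v hv
            rw [Finset.mem_coe, Finset.mem_filter, Finset.mem_Icc] at hv
            have hvQ : v ∈ Q0 := (hmemQ0 v).mpr ⟨hv.1.1, hv.1.2⟩
            rw [Finset.mem_coe, Finset.mem_Icc]
            exact ⟨colv_pos hndπ hQ0 hvQ, colv_le_Mval hndπ hQ0⟩
          · intro u hu v hv hcol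
            simp only [Finset.coe_filter, Set.mem_setOf_eq, Finset.mem_Icc] at hu hv
            exact rowOf_inj_same_col hndπ hQ0 ((hmemQ0 u).mpr ⟨hu.1.1, hu.1.2⟩)
              ((hmemQ0 v).mpr ⟨hv.1.1, hv.1.2⟩) hcol (hu.2.trans hv.2.symm)
      _ = M := by rw [Nat.card_Icc]; omega
  have hfold_le : (alphaOf (Q0 ++ [0])).foldr max 0 ≤ M := foldrMax_le hupper
  -- Lower bound: M ≤ fold
  have hfold_ge : M ≤ (alphaOf (Q0 ++ [0])).foldr max 0 := by
    rcases Nat.eq_zero_or_pos M with hM0 | hMpos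
    · omega
    obtain ⟨v, hvQ, hcolv⟩ := exists_colv_eq hndπ hQ0 (i := M) (by omega) (le_of_eq hM)
    set r := rowOf (Q0 ++ [0]) v with hr
    obtain ⟨hr1, hr2⟩ := rowOf_bounds hndπ hQ0 hvQ
    have hrL : r ≤ L := by rw [hL, hLr]; exact hr2
    have hmemr : ((Finset.Icc 1 ((Q0 ++ [0]).length - 1)).filter
        (fun w => rowOf (Q0 ++ [0]) w = r)).card ∈ alphaOf (Q0 ++ [0]) := by
      rw [alphaOf, List.mem_map]
      exact ⟨r, by rw [List.mem_range'_1]; exact ⟨hr1, by omega⟩, rfl⟩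
    refine le_trans ?_ (le_foldrMax hmemr)
    -- the chain gives M distinct elements in row r
    have hchain : ∀ s ∈ Finset.range M, (leftOf (Q0 ++ [0]))^[s] v ∈
        (Finset.Icc 1 ((Q0 ++ [0]).length - 1)).filter (fun w => rowOf (Q0 ++ [0]) w = r) := by
      intro s hs
      rw [Finset.mem_range] at hs
      obtain ⟨m1, m2⟩ := iter_leftOf hndπ hQ0 hvQ s (by omega)
      rw [Finset.mem_filter, Finset.mem_Icc, hπlen]
      refine ⟨?_, ?_⟩
      · have := (hmemQ0 _).mp m1; omega
      · rw [hr]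
        exact rowOf_iter hndπ hQ0 hvQ (by omega)
    have hinj : Set.InjOn (fun s => (leftOf (Q0 ++ [0]))^[s] v) (Finset.range M) := by
      intro s hs s' hs' heq
      simp only [Finset.coe_range, Set.mem_Iio] at hs hs'
      obtain ⟨_, m2⟩ := iter_leftOf hndπ hQ0 hvQ s (by omega)
      obtain ⟨_, m2'⟩ := iter_leftOf hndπ hQ0 hvQ s' (by omega)
      have hcc : colv Q0 ((leftOf (Q0 ++ [0]))^[s] v) = colv Q0 ((leftOf (Q0 ++ [0]))^[s'] v) :=
        congrArg (colv Q0) heq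
      omega
    calc M = (Finset.range M).card := by rw [Finset.card_range]
      _ ≤ _ := Finset.card_le_card_of_injOn _ hchain hinj
  constructor
  · rw [hmet]; omega
  · rw [hmet]; omega
end
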